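/- arXiv:2605.10778 — 10 statements merged into one kernel-verified Lean document; each statement's English description precedes it below -/
import Mathlib

section
/- Let H = (V,E) be an h-hypergraph, ≺ a linear order on E, and k ∈ ℕ. If S ⊆ E_{≥3} satisfies 3·|S| ≥ k + 3 (i.e., S contains at least k/3 + 1 hyperedges), then I'_S(H,k) = ∅. -/
attribute [local instance] Classical.propDecidable

/-- The independent sets of cardinality `k` of the underlying graph of the hypergraph with
hyperedge set `E`. -/
noncomputable def indepG {V : Type} [Fintype V] (E : Finset (Finset V)) (k : ℕ) :
    Finset (Finset V) :=
  Finset.univ.filter fun X => X.card = k ∧ ∀ e ∈ E, e.card = 2 → ¬ e ⊆ X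

/-- `I_invalid(H,k)`: independent sets of the underlying graph of cardinality `k` containing
some hyperedge of cardinality at least `3`. -/
noncomputable def invalidSets {V : Type} [Fintype V] (E : Finset (Finset V)) (k : ℕ) :
    Finset (Finset V) :=
  (indepG E k).filter fun X => ∃ e ∈ E, 3 ≤ e.card ∧ e ⊆ X

/-- `I_S(H,k)`: independent sets of the underlying graph of cardinality `k` containing all
hyperedges of `S`. -/
noncomputable def ISets {V : Type} [Fintype V] (E S : Finset (Finset V)) (k : ℕ) :
    Finset (Finset V) :=
  (indepG E k).filter fun X => ∀ e ∈ S, e ⊆ X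

/-- `I'_S(H,k)`: members `X` of `I_S(H,k)` such that for every `e ∈ S` and every hyperedge
`e' ∈ E` of cardinality at least 3 with `e ∩ e' ≠ ∅` and `e' ≺ e`, `e'` is not contained
in `X`. -/
noncomputable def Iprime {V : Type} [Fintype V] [DecidableEq V] (E : Finset (Finset V))
    (r : Finset V → Finset V → Prop) (S : Finset (Finset V)) (k : ℕ) : Finset (Finset V) :=
  (ISets E S k).filter fun X =>
    ∀ e ∈ S, ∀ e' ∈ E, 3 ≤ e'.card → (e ∩ e').Nonempty → r e' e → ¬ e' ⊆ X

/-- If `S ⊆ E_{≥3}` contains at least `k/3 + 1` hyperedges (i.e. `3·|S| ≥ k + 3`), then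
`I'_S(H,k) = ∅`. -/
theorem Iprime_eq_empty_of_large {V : Type} [Fintype V] [DecidableEq V] (h : ℕ)
    (E : Finset (Finset V)) (hE : ∀ e ∈ E, 2 ≤ e.card ∧ e.card ≤ h)
    (r : Finset V → Finset V → Prop)
    (hirrefl : ∀ e ∈ E, ¬ r e e)
    (htrans : ∀ e ∈ E, ∀ e' ∈ E, ∀ e'' ∈ E, r e e' → r e' e'' → r e e'')
    (htotal : ∀ e ∈ E, ∀ e' ∈ E, e ≠ e' → r e e' ∨ r e' e)
    (k : ℕ) (S : Finset (Finset V)) (hS : S ⊆ E.filter fun e => 3 ≤ e.card)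
    (hbig : k + 3 ≤ 3 * S.card) :
    Iprime E r S k = ∅ := by
  rw [Finset.eq_empty_iff_forall_notMem]
  intro X hX
  simp only [Iprime, ISets, indepG, Finset.mem_filter, Finset.mem_univ, true_and] at hX
  obtain ⟨⟨⟨hcard, _⟩, hsub⟩, hprime⟩ := hX
  -- facts about members of S
  have hSE : ∀ e ∈ S, e ∈ E ∧ 3 ≤ e.card := by
    intro e he
    have := hS he
    simpa [Finset.mem_filter] using this
  -- pairwise disjoint
  have hdisj : (S : Set (Finset V)).PairwiseDisjoint id := by
    intro e he e' he' hne
    simp only [Finset.mem_coe] at he he'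
    simp only [Function.onFun, id]
    rw [Finset.disjoint_left]
    intro a ha ha'
    have hint : (e ∩ e').Nonempty := ⟨a, Finset.mem_inter.mpr ⟨ha, ha'⟩⟩
    have hint' : (e' ∩ e).Nonempty := ⟨a, Finset.mem_inter.mpr ⟨ha', ha⟩⟩
    rcases htotal e (hSE e he).1 e' (hSE e' he').1 hne with hr | hr
    · exact hprime e' he' e (hSE e he).1 (hSE e he).2 hint' hr (hsub e he)
    · exact hprime e he e' (hSE e' he').1 (hSE e' he').2 hint hr (hsub e' he')
  have hbu : S.biUnion id ⊆ X := by
    intro a ha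
    obtain ⟨e, he, hae⟩ := Finset.mem_biUnion.mp ha
    exact hsub e he hae
  have h1 : (S.biUnion id).card = ∑ e ∈ S, e.card := by
    rw [Finset.card_biUnion (fun e he e' he' hne => hdisj he he' hne)]
    rfl
  have h2 : 3 * S.card ≤ ∑ e ∈ S, e.card := by
    calc 3 * S.card = ∑ _e ∈ S, 3 := by rw [Finset.sum_const, smul_eq_mul, mul_comm]
    _ ≤ ∑ e ∈ S, e.card := Finset.sum_le_sum fun e he => (hSE e he).2
  have := Finset.card_le_card hbu
  omega
end

section
/- Let H = (V,E) be an h-hypergraph, ≺ a linear order on E, and k ∈ ℕ. Then, as an identity of integers, |I_invalid(H,k)| = Σ_{i=1}^{⌈k/3⌉} Σ_{S ⊆ E_{≥3}, |S| = i} (−1)^{i+1} · |I'_S(H,k)|. -/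
attribute [local instance] Classical.propDecidable

set_option maxHeartbeats 1000000

lemma exists_min_rel {α : Type*} (r : α → α → Prop) :
    ∀ (A : Finset α), A.Nonempty →
      (∀ a ∈ A, ∀ b ∈ A, ∀ c ∈ A, r a b → r b c → r a c) →
      (∀ a ∈ A, ¬ r a a) → ∃ m ∈ A, ∀ a ∈ A, ¬ r a m := by
  classical
  intro A
  induction A using Finset.induction_on with
  | empty => intro h; simp at h
  | @insert a A' ha ih =>
    intro _ htrans hirr
    by_cases hA' : A'.Nonempty
    · obtain ⟨m, hm, hmin⟩ := ih hA'
        (fun x hx y hy z hz => htrans x (Finset.mem_insert_of_mem hx) y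
          (Finset.mem_insert_of_mem hy) z (Finset.mem_insert_of_mem hz))
        (fun x hx => hirr x (Finset.mem_insert_of_mem hx))
      by_cases har : r a m
      · refine ⟨a, Finset.mem_insert_self _ _, ?_⟩
        intro b hb hrb
        rcases Finset.mem_insert.mp hb with rfl | hb
        · exact hirr b (Finset.mem_insert_self b A') hrb
        · exact hmin b hb (htrans b (Finset.mem_insert_of_mem hb)
            a (Finset.mem_insert_self a A') m (Finset.mem_insert_of_mem hm) hrb har)
      · refine ⟨m, Finset.mem_insert_of_mem hm, ?_⟩
        intro b hb hrb
        rcases Finset.mem_insert.mp hb with rfl | hb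
        · exact har hrb
        · exact hmin b hb hrb
    · refine ⟨a, Finset.mem_insert_self _ _, ?_⟩
      intro b hb hrb
      rcases Finset.mem_insert.mp hb with rfl | hb
      · exact hirr b (Finset.mem_insert_self b A') hrb
      · exact hA' ⟨b, hb⟩

lemma alt_sum_choose (m c : ℕ) (hmc : m ≤ c) :
    ∑ i ∈ Finset.Icc 1 c, (-1 : ℤ) ^ (i + 1) * (m.choose i : ℤ) =
      if m = 0 then 0 else 1 := by
  have h1 : ∑ i ∈ Finset.range (c + 1), (-1 : ℤ) ^ i * (m.choose i : ℤ) =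
      ∑ i ∈ Finset.range (m + 1), (-1 : ℤ) ^ i * (m.choose i : ℤ) := by
    refine (Finset.sum_subset ?_ ?_).symm
    · intro x hx
      simp only [Finset.mem_range] at *
      omega
    · intro x hx hnx
      simp only [Finset.mem_range] at hx hnx
      have : m < x := by omega
      simp [Nat.choose_eq_zero_of_lt this]
  have h2 := Int.alternating_sum_range_choose (n := m)
  have h3 : Finset.range (c + 1) = insert 0 (Finset.Icc 1 c) := by
    ext x
    simp only [Finset.mem_range, Finset.mem_insert, Finset.mem_Icc]
    omega
  have h4 : ∑ i ∈ Finset.range (c + 1), (-1 : ℤ) ^ i * (m.choose i : ℤ) =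
      1 + ∑ i ∈ Finset.Icc 1 c, (-1 : ℤ) ^ i * (m.choose i : ℤ) := by
    rw [h3, Finset.sum_insert (by simp)]
    simp
  have h5 : ∑ i ∈ Finset.Icc 1 c, (-1 : ℤ) ^ (i + 1) * (m.choose i : ℤ) =
      - ∑ i ∈ Finset.Icc 1 c, (-1 : ℤ) ^ i * (m.choose i : ℤ) := by
    rw [← Finset.sum_neg_distrib]
    refine Finset.sum_congr rfl fun i _ => by ring
  rw [h5]
  have := h4.symm.trans (h1.trans h2)
  split_ifs at * <;> linarith

/-- Refined inclusion–exclusion formula: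
`|I_invalid(H,k)| = Σ_{i=1}^{⌈k/3⌉} Σ_{S ⊆ E_{≥3}, |S| = i} (-1)^{i+1} |I'_S(H,k)|`. -/
theorem invalid_card_inclusion_exclusion_Iprime {V : Type} [Fintype V] [DecidableEq V]
    (h : ℕ) (E : Finset (Finset V)) (hE : ∀ e ∈ E, 2 ≤ e.card ∧ e.card ≤ h)
    (r : Finset V → Finset V → Prop)
    (hirrefl : ∀ e ∈ E, ¬ r e e)
    (htrans : ∀ e ∈ E, ∀ e' ∈ E, ∀ e'' ∈ E, r e e' → r e' e'' → r e e'')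
    (htotal : ∀ e ∈ E, ∀ e' ∈ E, e ≠ e' → r e e' ∨ r e' e)
    (k : ℕ) :
    ((invalidSets E k).card : ℤ) =
      ∑ i ∈ Finset.Icc 1 ⌈(k : ℚ) / 3⌉₊,
        ∑ S ∈ Finset.powersetCard i (E.filter fun e => 3 ≤ e.card),
          (-1 : ℤ) ^ (i + 1) * ((Iprime E r S k).card : ℤ) := by
  classical
  set c := ⌈(k : ℚ) / 3⌉₊ with hc
  set F := E.filter (fun e => 3 ≤ e.card) with hF
  -- rewrite Iprime as a single filter over indepG
  have hIp : ∀ S : Finset (Finset V), Iprime E r S k =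
      (indepG E k).filter (fun X => (∀ e ∈ S, e ⊆ X) ∧
        ∀ e ∈ S, ∀ e' ∈ E, 3 ≤ e'.card → (e ∩ e').Nonempty → r e' e → ¬ e' ⊆ X) := by
    intro S
    ext X
    simp only [Iprime, ISets, Finset.mem_filter]
    tauto
  -- key pointwise identity
  have key : ∀ X ∈ indepG E k,
      (∑ i ∈ Finset.Icc 1 c, ∑ S ∈ Finset.powersetCard i F,
        (-1 : ℤ) ^ (i + 1) * (if (∀ e ∈ S, e ⊆ X) ∧
          (∀ e ∈ S, ∀ e' ∈ E, 3 ≤ e'.card → (e ∩ e').Nonempty → r e' e → ¬ e' ⊆ X)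
          then (1 : ℤ) else 0)) =
      (if ∃ e ∈ E, 3 ≤ e.card ∧ e ⊆ X then (1 : ℤ) else 0) := by
    intro X hX
    have hXk : X.card = k := by
      simp only [indepG, Finset.mem_filter] at hX
      exact hX.2.1
    set Mx := E.filter (fun e => 3 ≤ e.card ∧ e ⊆ X ∧
      ∀ e' ∈ E, 3 ≤ e'.card → (e ∩ e').Nonempty → r e' e → ¬ e' ⊆ X) with hMx
    have hMxF : Mx ⊆ F := by
      intro e he
      simp only [hMx, hF, Finset.mem_filter] at he ⊢
      exact ⟨he.1, he.2.1⟩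
    -- condition ↔ S ⊆ Mx
    have hcond : ∀ i : ℕ, ∀ S ∈ Finset.powersetCard i F,
        ((∀ e ∈ S, e ⊆ X) ∧
          (∀ e ∈ S, ∀ e' ∈ E, 3 ≤ e'.card → (e ∩ e').Nonempty → r e' e → ¬ e' ⊆ X))
        ↔ S ⊆ Mx := by
      intro i S hS
      rw [Finset.mem_powersetCard] at hS
      constructor
      · rintro ⟨h1, h2⟩ e he
        have heF := hS.1 he
        simp only [hF, Finset.mem_filter] at heF
        simp only [hMx, Finset.mem_filter]
        exact ⟨heF.1, heF.2, h1 e he, h2 e he⟩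
      · intro hSM
        constructor
        · intro e he
          have := hSM he
          simp only [hMx, Finset.mem_filter] at this
          exact this.2.2.1
        · intro e he
          have := hSM he
          simp only [hMx, Finset.mem_filter] at this
          exact this.2.2.2
    -- inner sum = choose
    have hinner : ∀ i : ℕ, (∑ S ∈ Finset.powersetCard i F,
        (if (∀ e ∈ S, e ⊆ X) ∧
          (∀ e ∈ S, ∀ e' ∈ E, 3 ≤ e'.card → (e ∩ e').Nonempty → r e' e → ¬ e' ⊆ X)
          then (1 : ℤ) else 0)) = (Mx.card.choose i : ℤ) := by
      intro i
      rw [Finset.sum_congr rfl (fun S hS => by rw [if_congr (hcond i S hS) rfl rfl])]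
      rw [Finset.sum_boole]
      have : (Finset.powersetCard i F).filter (fun S => S ⊆ Mx) =
          Finset.powersetCard i Mx := by
        ext S
        simp only [Finset.mem_filter, Finset.mem_powersetCard]
        constructor
        · rintro ⟨⟨_, hcard⟩, hSM⟩
          exact ⟨hSM, hcard⟩
        · rintro ⟨hSM, hcard⟩
          exact ⟨⟨hSM.trans hMxF, hcard⟩, hSM⟩
      rw [this, Finset.card_powersetCard]
    -- elements of Mx are pairwise disjoint
    have hdisj : ∀ x ∈ Mx, ∀ y ∈ Mx, x ≠ y → Disjoint x y := by
      intro x hx y hy hxy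
      simp only [hMx, Finset.mem_filter] at hx hy
      rw [Finset.disjoint_iff_inter_eq_empty, ← Finset.not_nonempty_iff_eq_empty]
      intro hne
      rcases htotal x hx.1 y hy.1 hxy with hr | hr
      · exact hy.2.2.2 x hx.1 hx.2.1 (by rwa [Finset.inter_comm]) hr hx.2.2.1
      · exact hx.2.2.2 y hy.1 hy.2.1 hne hr hy.2.2.1
    -- bound on |Mx|
    have h3m : 3 * Mx.card ≤ k := by
      have hb : Mx.biUnion id ⊆ X := by
        intro v hv
        rw [Finset.mem_biUnion] at hv
        obtain ⟨e, he, hve⟩ := hv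
        simp only [hMx, Finset.mem_filter] at he
        exact he.2.2.1 hve
      have hcb := Finset.card_biUnion hdisj (s := Mx) (t := id)
      have h1 : 3 * Mx.card ≤ ∑ e ∈ Mx, (id e).card := by
        have := Finset.sum_le_sum (f := fun _ : Finset V => 3) (g := fun e => (id e).card)
          (s := Mx) (fun e he => by
            simp only [hMx, Finset.mem_filter] at he
            exact he.2.1)
        simpa [Finset.sum_const, Nat.mul_comm] using this
      have h2 : (Mx.biUnion id).card ≤ k := hXk ▸ Finset.card_le_card hb
      exact h1.trans (hcb ▸ h2)
    have hmc : Mx.card ≤ c := by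
      have h1 : (Mx.card : ℚ) ≤ (k : ℚ) / 3 := by
        have : ((3 * Mx.card : ℕ) : ℚ) ≤ (k : ℚ) := by exact_mod_cast h3m
        push_cast at this
        linarith
      have h2 : ((k : ℚ) / 3) ≤ (c : ℚ) := Nat.le_ceil _
      exact_mod_cast h1.trans h2
    -- assemble
    calc (∑ i ∈ Finset.Icc 1 c, ∑ S ∈ Finset.powersetCard i F,
          (-1 : ℤ) ^ (i + 1) * (if (∀ e ∈ S, e ⊆ X) ∧
            (∀ e ∈ S, ∀ e' ∈ E, 3 ≤ e'.card → (e ∩ e').Nonempty → r e' e → ¬ e' ⊆ X)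
            then (1 : ℤ) else 0))
        = ∑ i ∈ Finset.Icc 1 c, (-1 : ℤ) ^ (i + 1) * (Mx.card.choose i : ℤ) := by
          refine Finset.sum_congr rfl fun i _ => ?_
          rw [← Finset.mul_sum, hinner i]
      _ = if Mx.card = 0 then 0 else 1 := alt_sum_choose _ _ hmc
      _ = if ∃ e ∈ E, 3 ≤ e.card ∧ e ⊆ X then (1 : ℤ) else 0 := by
          have hiff : Mx.card ≠ 0 ↔ ∃ e ∈ E, 3 ≤ e.card ∧ e ⊆ X := by
            rw [ne_eq, Finset.card_eq_zero, ← ne_eq, ← Finset.nonempty_iff_ne_empty]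
            constructor
            · rintro ⟨e, he⟩
              simp only [hMx, Finset.mem_filter] at he
              exact ⟨e, he.1, he.2.1, he.2.2.1⟩
            · rintro ⟨e, heE, he3, heX⟩
              set A := E.filter (fun e => 3 ≤ e.card ∧ e ⊆ X) with hA
              have hAE : A ⊆ E := Finset.filter_subset _ _
              obtain ⟨m0, hm0A, hm0min⟩ := exists_min_rel r A
                ⟨e, by simp [hA, Finset.mem_filter]; exact ⟨heE, he3, heX⟩⟩
                (fun a ha b hb c hc => htrans a (hAE ha) b (hAE hb) c (hAE hc))
                (fun a ha => hirrefl a (hAE ha))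
              simp only [hA, Finset.mem_filter] at hm0A
              refine ⟨m0, ?_⟩
              simp only [hMx, Finset.mem_filter]
              refine ⟨hm0A.1, hm0A.2.1, hm0A.2.2, ?_⟩
              intro e' he'E he'3 _ hre' he'X
              exact hm0min e' (by simp [hA, Finset.mem_filter]; exact ⟨he'E, he'3, he'X⟩) hre'
          by_cases hM : Mx.card = 0
          · simp [hM, (not_iff_not.mpr hiff).mp (by simp [hM])]
          · simp [hM, hiff.mp hM]
    done
  -- now the global rearrangement
  have hLHS : ((invalidSets E k).card : ℤ) =
      ∑ X ∈ indepG E k, (if ∃ e ∈ E, 3 ≤ e.card ∧ e ⊆ X then (1 : ℤ) else 0) := by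
    rw [invalidSets, ← Finset.sum_boole]
    exact Finset.sum_congr rfl fun x _ => by split_ifs <;> rfl
  rw [hLHS]
  have hRHS : ∀ i : ℕ, ∀ S : Finset (Finset V), ((Iprime E r S k).card : ℤ) =
      ∑ X ∈ indepG E k, (if (∀ e ∈ S, e ⊆ X) ∧
        (∀ e ∈ S, ∀ e' ∈ E, 3 ≤ e'.card → (e ∩ e').Nonempty → r e' e → ¬ e' ⊆ X)
        then (1 : ℤ) else 0) := by
    intro i S
    rw [hIp S, ← Finset.sum_boole]
    exact Finset.sum_congr rfl fun x _ => by split_ifs <;> rfl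
  calc (∑ X ∈ indepG E k, (if ∃ e ∈ E, 3 ≤ e.card ∧ e ⊆ X then (1 : ℤ) else 0))
      = ∑ X ∈ indepG E k, ∑ i ∈ Finset.Icc 1 c, ∑ S ∈ Finset.powersetCard i F,
          (-1 : ℤ) ^ (i + 1) * (if (∀ e ∈ S, e ⊆ X) ∧
            (∀ e ∈ S, ∀ e' ∈ E, 3 ≤ e'.card → (e ∩ e').Nonempty → r e' e → ¬ e' ⊆ X)
            then (1 : ℤ) else 0) := by
        exact (Finset.sum_congr rfl key).symm
    _ = ∑ i ∈ Finset.Icc 1 c, ∑ S ∈ Finset.powersetCard i F,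
          (-1 : ℤ) ^ (i + 1) * ((Iprime E r S k).card : ℤ) := by
        rw [Finset.sum_comm]
        refine Finset.sum_congr rfl fun i _ => ?_
        rw [Finset.sum_comm]
        refine Finset.sum_congr rfl fun S _ => ?_
        rw [hRHS i S, Finset.mul_sum]
end

section
/- Let ℓ ≥ 2 and let k₁ ≤ k₂ ≤ ⋯ ≤ k_ℓ be natural numbers. Then there exists a function c : {1,…,ℓ−2} → {1,2,3} assigning the values k₁,…,k_{ℓ−2} to three bins such that for every pair p,q ∈ {1,2,3}, the absolute difference |Σ_{i : c(i)=p} k_i − Σ_{j : c(j)=q} k_j| is at most k_{ℓ−1}. -/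
lemma balanced_bins_aux (k : ℕ → ℕ) (B : ℤ) (hB : 0 ≤ B) :
    ∀ n : ℕ, (∀ i, 1 ≤ i → i ≤ n → (k i : ℤ) ≤ B) →
    ∃ c : ℕ → Fin 3, ∀ p q : Fin 3,
      |(∑ i ∈ (Finset.Icc 1 n).filter fun i => c i = p, (k i : ℤ)) -
        ∑ j ∈ (Finset.Icc 1 n).filter fun j => c j = q, (k j : ℤ)| ≤ B := by
  intro n
  induction n with
  | zero =>
    intro _
    exact ⟨fun _ => 0, fun p q => by simp [hB]⟩
  | succ n ih =>
    intro hk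
    obtain ⟨c, hc⟩ := ih (fun i h1 h2 => hk i h1 (h2.trans (Nat.le_succ n)))
    obtain ⟨p₀, -, hp₀⟩ := Finset.exists_min_image Finset.univ
      (fun p => ∑ i ∈ (Finset.Icc 1 n).filter fun i => c i = p, (k i : ℤ))
      ⟨0, Finset.mem_univ 0⟩
    refine ⟨fun i => if i = n + 1 then p₀ else c i, ?_⟩
    have hins : Finset.Icc 1 (n + 1) = insert (n + 1) (Finset.Icc 1 n) := by
      ext x; simp [Finset.mem_Icc]; omega
    have key : ∀ p : Fin 3,
        (∑ i ∈ (Finset.Icc 1 (n + 1)).filter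
            (fun i => (if i = n + 1 then p₀ else c i) = p), (k i : ℤ)) =
          (∑ i ∈ (Finset.Icc 1 n).filter fun i => c i = p, (k i : ℤ))
            + (if p₀ = p then (k (n + 1) : ℤ) else 0) := by
      intro p
      have hfc : ((Finset.Icc 1 n).filter fun i => (if i = n + 1 then p₀ else c i) = p)
          = (Finset.Icc 1 n).filter fun i => c i = p := by
        apply Finset.filter_congr
        intro i hi
        simp only [Finset.mem_Icc] at hi
        rw [if_neg (by omega)]
      rw [hins, Finset.filter_insert, if_pos rfl]
      by_cases h : p₀ = p
      · rw [if_pos h, Finset.sum_insert (by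
          simp only [Finset.mem_filter, Finset.mem_Icc]; omega), hfc, if_pos h]
        ring
      · rw [if_neg h, hfc, if_neg h, add_zero]
    intro p q
    rw [key p, key q]
    have hx0 : (0 : ℤ) ≤ (k (n + 1) : ℤ) := Int.ofNat_nonneg _
    have hxB : (k (n + 1) : ℤ) ≤ B := hk (n + 1) (by omega) le_rfl
    have hpq := abs_le.mp (hc p q)
    have hmin_p := hp₀ p (Finset.mem_univ p)
    have hmin_q := hp₀ q (Finset.mem_univ q)
    rw [abs_le]
    by_cases hp : p₀ = p <;> by_cases hq : p₀ = q
    · rw [if_pos hp, if_pos hq]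
      constructor <;> linarith [hpq.1, hpq.2]
    · rw [if_pos hp, if_neg hq]
      subst hp
      constructor <;> linarith [hpq.1, hpq.2, hmin_q]
    · rw [if_neg hp, if_pos hq]
      subst hq
      constructor <;> linarith [hpq.1, hpq.2, hmin_p]
    · rw [if_neg hp, if_neg hq]
      constructor <;> linarith [hpq.1, hpq.2]

/-- **Balanced bins.** Let `ℓ ≥ 2` and `k₁ ≤ k₂ ≤ ⋯ ≤ k_ℓ` be natural numbers. Then the values
`k₁, …, k_{ℓ-2}` can be distributed into three bins so that for every pair of bins the absolute
difference of their sums is at most `k_{ℓ-1}`. -/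
theorem balanced_bins (ℓ : ℕ) (hℓ : 2 ≤ ℓ) (k : ℕ → ℕ)
    (hmono : ∀ i j : ℕ, 1 ≤ i → i ≤ j → j ≤ ℓ → k i ≤ k j) :
    ∃ c : ℕ → Fin 3, ∀ p q : Fin 3,
      |(∑ i ∈ (Finset.Icc 1 (ℓ - 2)).filter fun i => c i = p, (k i : ℤ)) -
        ∑ j ∈ (Finset.Icc 1 (ℓ - 2)).filter fun j => c j = q, (k j : ℤ)| ≤
        (k (ℓ - 1) : ℤ) := by
  apply balanced_bins_aux k (k (ℓ - 1) : ℤ) (Int.ofNat_nonneg _)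
  intro i h1 h2
  exact_mod_cast hmono i (ℓ - 1) h1 (by omega) (by omega)
end

section
/- Let h ≥ 1 and let f : {0,1}^h → {0,1} be a Boolean constraint function that is 0-valid (f(0,…,0) = 1) and non-trivial (some assignment violates f), with u_min(f) = c (so c ≥ 1). Define its symmetrization f_sym(x₁,…,x_h) := ⋀_{σ ∈ S_h} f(x_{σ(1)},…,x_{σ(h)}). Let k ≥ 0 and K := k + h. Then for every assignment a : {1,…,K} → {0,1} of weight at most k, the following are equivalent: (i) f_sym(a(ι(1)),…,a(ι(h))) = 1 for every injective map ι : {1,…,h} → {1,…,K}; (ii) the weight of a is strictly less than c. -/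
/-- The weight of a Boolean assignment: its number of `true` coordinates. -/
def bweight {r : ℕ} (x : Fin r → Bool) : ℕ :=
  (Finset.univ.filter fun j => x j = true).card

/-- The symmetrization `f_sym(x₁,…,x_h) = ⋀_{σ ∈ S_h} f(x_{σ(1)},…,x_{σ(h)})`. -/
def fsym {h : ℕ} (f : (Fin h → Bool) → Bool) (x : Fin h → Bool) : Bool :=
  decide (∀ σ : Equiv.Perm (Fin h), f (x ∘ σ) = true)

lemma bweight_card_subtype {r : ℕ} (x : Fin r → Bool) :
    Fintype.card {j : Fin r // x j = true} = bweight x := by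
  simp [bweight, Fintype.card_subtype]

lemma bweight_le {r : ℕ} (x : Fin r → Bool) : bweight x ≤ r := by
  simpa [bweight] using (Finset.card_filter_le Finset.univ fun j => x j = true)


/-- **The `LessThan^K_c` gadget.** Let `f` be a 0-valid, non-trivial Boolean constraint function
of arity `h ≥ 1` with `u_min(f) = c`, and let `K = k + h`. Then an assignment
`a : Fin K → Bool` of weight at most `k` satisfies all constraints `f_sym` placed on injectively
chosen `h`-tuples of the `K` variables if and only if its weight is strictly less than `c`. -/
theorem lessThan_gadget (h : ℕ) (hh : 1 ≤ h) (f : (Fin h → Bool) → Bool)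
    (h0valid : f (fun _ => false) = true)
    (c : ℕ)
    (hc_ex : ∃ x : Fin h → Bool, f x = false ∧ bweight x = c)
    (hc_min : ∀ x : Fin h → Bool, f x = false → c ≤ bweight x)
    (k : ℕ) (a : Fin (k + h) → Bool) (ha : bweight a ≤ k) :
    (∀ ι : Fin h → Fin (k + h), Function.Injective ι → fsym f (a ∘ ι) = true) ↔
      bweight a < c := by
  constructor
  · intro H
    by_contra hge
    push_neg at hge
    obtain ⟨x, hxf, hxc⟩ := hc_ex
    have hch : c ≤ h := hxc ▸ bweight_le x
    have hKa : bweight a ≤ k := ha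
    -- embedding of true coords
    have h1 : Fintype.card {i : Fin h // x i = true} ≤
        Fintype.card {j : Fin (k + h) // a j = true} := by
      rw [bweight_card_subtype, bweight_card_subtype, hxc]; exact hge
    have h2 : Fintype.card {i : Fin h // ¬ x i = true} ≤
        Fintype.card {j : Fin (k + h) // ¬ a j = true} := by
      rw [Fintype.card_subtype_compl, Fintype.card_subtype_compl,
        bweight_card_subtype, bweight_card_subtype, hxc, Fintype.card_fin, Fintype.card_fin]
      omega
    obtain ⟨e1⟩ := Function.Embedding.nonempty_of_card_le h1
    obtain ⟨e2⟩ := Function.Embedding.nonempty_of_card_le h2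
    set ι : Fin h → Fin (k + h) := fun i =>
      if hx : x i = true then (e1 ⟨i, hx⟩ : Fin (k + h)) else (e2 ⟨i, hx⟩ : Fin (k + h))
      with hι_def
    have haι : ∀ i, a (ι i) = x i := by
      intro i
      by_cases hx : x i = true
      · simp only [hι_def, dif_pos hx, (e1 ⟨i, hx⟩).2, hx]
      · have := (e2 ⟨i, hx⟩).2
        simp only [hι_def, dif_neg hx]
        simp only [Bool.not_eq_true] at this hx ⊢
        rw [this, hx]
    have hinj : Function.Injective ι := by
      intro i j hij
      by_cases hxi : x i = true <;> by_cases hxj : x j = true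
      · simp only [hι_def, dif_pos hxi, dif_pos hxj] at hij
        exact congrArg Subtype.val (e1.injective (Subtype.ext hij))
      · exfalso
        have : a (ι i) = a (ι j) := by rw [hij]
        rw [haι, haι] at this
        rw [hxi] at this
        exact hxj this.symm
      · exfalso
        have : a (ι i) = a (ι j) := by rw [hij]
        rw [haι, haι] at this
        rw [hxj] at this
        exact hxi this
      · simp only [hι_def, dif_neg hxi, dif_neg hxj] at hij
        exact congrArg Subtype.val (e2.injective (Subtype.ext hij))
    have := H ι hinj
    rw [fsym, decide_eq_true_eq] at this
    have h1 := this 1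
    have : (a ∘ ι) ∘ ⇑(1 : Equiv.Perm (Fin h)) = x := by
      funext i; simp [haι i]
    rw [this, hxf] at h1
    exact Bool.false_ne_true h1
  · intro hlt ι hι
    rw [fsym, decide_eq_true_eq]
    intro σ
    by_contra hft
    have hf : f ((a ∘ ι) ∘ ⇑σ) = false := by
      cases hv : f ((a ∘ ι) ∘ ⇑σ) with
      | false => rfl
      | true => exact absurd hv hft
    have hmin := hc_min _ hf
    have hble : bweight ((a ∘ ι) ∘ ⇑σ) ≤ bweight a := by
      apply Finset.card_le_card_of_injOn (fun i => ι (σ i))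
      · intro i hi
        simp only [Finset.mem_coe, Finset.mem_filter, Finset.mem_univ, true_and] at hi ⊢
        exact hi
      · intro i _ j _ hij
        exact σ.injective (hι hij)
    omega
end

section
/- Let c ≥ 2, k ≥ 1 and K be integers with K ≥ k + c + 1. Let X and Y be disjoint finite sets with |X| ≥ k and |Y| ≥ K − c, and let E be a set of c-element subsets of X. Then the following are equivalent: (i) there exists an assignment a : X → {0,1} of weight exactly k such that for every e ∈ E, not all elements of e receive value 1; (ii) there exists an assignment a' : X ∪ Y → {0,1} of weight exactly k such that for every e ∈ E and every (K−c)-element subset T ⊆ Y, strictly fewer than c elements of e ∪ T receive value 1 under a'. -/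
/-- **Correctness of the Dense Embedding.** Let `c ≥ 2`, `k ≥ 1`, `K ≥ k + c + 1`, and let `X`,
`Y` be disjoint finite sets with `|X| ≥ k`, `|Y| ≥ K - c`, and `E` a set of `c`-element subsets
of `X`. Then `E` (viewed as NAND_c constraints) has a weight-`k` solution over `X` iff the
LessThan-type constraints of the dense embedding have a weight-`k` solution over `X ∪ Y`. -/
theorem dense_embedding_correct (α : Type) [DecidableEq α] (c k K : ℕ)
    (hc : 2 ≤ c) (hk : 1 ≤ k) (hK : k + c + 1 ≤ K)
    (X Y : Finset α) (hXY : Disjoint X Y) (hX : k ≤ X.card) (hY : K - c ≤ Y.card)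
    (E : Finset (Finset α)) (hE : ∀ e ∈ E, e ⊆ X ∧ e.card = c) :
    (∃ a : α → Bool,
        (X.filter fun v => a v = true).card = k ∧
        ∀ e ∈ E, ∃ v ∈ e, a v = false) ↔
      ∃ a' : α → Bool,
        ((X ∪ Y).filter fun v => a' v = true).card = k ∧
        ∀ e ∈ E, ∀ T ⊆ Y, T.card = K - c →
          ((e ∪ T).filter fun v => a' v = true).card < c := by
  constructor
  · rintro ⟨a, ha, hcon⟩
    refine ⟨fun v => a v && decide (v ∈ X), ?_, ?_⟩
    · have : ((X ∪ Y).filter fun v => (a v && decide (v ∈ X)) = true)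
          = X.filter fun v => a v = true := by
        ext v
        simp only [Finset.mem_filter, Finset.mem_union, Bool.and_eq_true, decide_eq_true_eq]
        tauto
      rw [this]; exact ha
    · intro e he T hT hTcard
      obtain ⟨v₀, hv₀e, hv₀⟩ := hcon e he
      have hsub : (e ∪ T).filter (fun v => (a v && decide (v ∈ X)) = true)
          ⊆ e.filter fun v => a v = true := by
        intro v hv
        simp only [Finset.mem_filter, Finset.mem_union, Bool.and_eq_true,
          decide_eq_true_eq] at hv ⊢
        obtain ⟨hv1, hv2, hv3⟩ := hv
        rcases hv1 with h | h
        · exact ⟨h, hv2⟩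
        · exact absurd hv3 (Finset.disjoint_right.mp hXY (hT h))
      have hlt : (e.filter fun v => a v = true).card < c := by
        rw [← (hE e he).2]
        apply Finset.card_lt_card
        refine (Finset.ssubset_iff_of_subset (Finset.filter_subset _ _)).mpr
          ⟨v₀, hv₀e, ?_⟩
        simp [Finset.mem_filter, hv₀]
      exact lt_of_le_of_lt (Finset.card_le_card hsub) hlt
  · rintro ⟨a', ha', hcon⟩
    set t := (Y.filter fun v => a' v = true).card with ht
    have hdisj : Disjoint (X.filter fun v => a' v = true)
        (Y.filter fun v => a' v = true) :=
      Finset.disjoint_filter_filter hXY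
    have hsplit : (X.filter fun v => a' v = true).card + t = k := by
      rw [ht, ← Finset.card_union_of_disjoint hdisj, ← Finset.filter_union]
      exact ha'
    -- choose T ⊆ Y containing all true elements of Y, of card K - c
    obtain ⟨T, hT1, hT2, hT3⟩ :=
      Finset.exists_subsuperset_card_eq (Finset.filter_subset (fun v => a' v = true) Y)
        (by omega) hY
    have key : ∀ e ∈ E, (e.filter fun v => a' v = true).card + t < c := by
      intro e he
      have h := hcon e he T hT2 hT3
      have hed : Disjoint (e.filter fun v => a' v = true)
          (T.filter fun v => a' v = true) :=
        Finset.disjoint_filter_filter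
          (Finset.disjoint_of_subset_left (hE e he).1
            (Finset.disjoint_of_subset_right hT2 hXY))
      rw [Finset.filter_union, Finset.card_union_of_disjoint hed] at h
      have hTf : T.filter (fun v => a' v = true) = Y.filter fun v => a' v = true := by
        apply Finset.Subset.antisymm
        · intro v hv
          simp only [Finset.mem_filter] at hv ⊢
          exact ⟨hT2 hv.1, hv.2⟩
        · intro v hv
          simp only [Finset.mem_filter] at hv ⊢
          exact ⟨hT1 (Finset.mem_filter.mpr hv), hv.2⟩
      rw [hTf] at h
      exact h
    -- pick t extra elements of X outside the true set
    have hXc : t ≤ (X \ X.filter fun v => a' v = true).card := by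
      rw [Finset.card_sdiff_of_subset (Finset.filter_subset _ _)]
      omega
    obtain ⟨P, hP1, hP2⟩ := Finset.exists_subset_card_eq hXc
    set S := (X.filter fun v => a' v = true) ∪ P with hS
    have hSX : S ⊆ X :=
      Finset.union_subset (Finset.filter_subset _ _) (hP1.trans (Finset.sdiff_subset))
    have hdPS : Disjoint (X.filter fun v => a' v = true) P := by
      rw [Finset.disjoint_left]
      intro v hv hvP
      exact (Finset.mem_sdiff.mp (hP1 hvP)).2 hv
    have hScard : S.card = k := by
      rw [hS, Finset.card_union_of_disjoint hdPS, hP2]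
      omega
    refine ⟨fun v => decide (v ∈ S), ?_, ?_⟩
    · have : (X.filter fun v => decide (v ∈ S) = true) = S := by
        ext v
        simp only [Finset.mem_filter, decide_eq_true_eq]
        exact ⟨fun h => h.2, fun h => ⟨hSX h, h⟩⟩
      rw [this]; exact hScard
    · intro e he
      have hsub : (e.filter fun v => decide (v ∈ S) = true)
          ⊆ (e.filter fun v => a' v = true) ∪ P := by
        intro v hv
        simp only [Finset.mem_filter, decide_eq_true_eq, hS, Finset.mem_union] at hv ⊢
        obtain ⟨hve, hvS⟩ := hv
        rcases hvS with h | h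
        · exact Or.inl ⟨hve, h.2⟩
        · exact Or.inr h
      have hlt : (e.filter fun v => decide (v ∈ S) = true).card < e.card := by
        calc (e.filter fun v => decide (v ∈ S) = true).card
            ≤ ((e.filter fun v => a' v = true) ∪ P).card := Finset.card_le_card hsub
          _ ≤ (e.filter fun v => a' v = true).card + P.card := Finset.card_union_le _ _
          _ < c := by have := key e he; omega
          _ = e.card := ((hE e he).2).symm
      by_contra hcontra
      push_neg at hcontra
      have heq : (e.filter fun v => decide (v ∈ S) = true) = e := by
        apply Finset.filter_true_of_mem
        intro v hv
        have := hcontra v hv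
        simpa using this
      rw [heq] at hlt
      exact lt_irrefl _ hlt
end

section
/- Let k ≥ 1, r ≥ 3 and i ≥ r+1 be integers. Let H* be a k-partite r-uniform hypergraph with pairwise disjoint parts V₁,…,V_k (every hyperedge of H* is an r-element subset of V₁ ∪ ⋯ ∪ V_k with at most one vertex in each part), with hyperedge set E*, and let d₁,…,d_{i−r−1} be distinct fresh vertices not in any part. Define the hypergraph H with vertex set V₁ ∪ ⋯ ∪ V_k ∪ {d₁,…,d_{i−r−1}} and hyperedge set E*_{(k)} ∪ ⋃_{j=1}^{k} { all 2-element subsets of V_j } ∪ { {v} ∪ {d₁,…,d_{i−r−1}} ∪ e : e ∈ E*, v ∈ V_k }, where E*_{(k)} is the set of hyperedges of H* containing a vertex of V_k. Then H contains an independent set of cardinality k + i − r − 1 if and only if there exist x₁ ∈ V₁, …, x_k ∈ V_k such that {x₁,…,x_k} contains no hyperedge of H*. -/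
attribute [local instance] Classical.propDecidable

/-- **Arity-sensitive lower bound construction.** Let `k ≥ 1`, `r ≥ 3`, `i ≥ r + 1`. Given a
`k`-partite `r`-uniform hypergraph `H*` with pairwise disjoint parts `V₁, …, V_k` and hyperedge
set `E*`, and fresh distinct dummy vertices `d₁, …, d_{i-r-1}`, form the hypergraph `H` with
vertex set `V₁ ∪ ⋯ ∪ V_k ∪ {d₁,…,d_{i-r-1}}` and hyperedges: the hyperedges of `H*` meeting
`V_k`, all 2-element subsets within each part, and the sets `{v} ∪ {d₁,…,d_{i-r-1}} ∪ e` for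
`e ∈ E*` and `v ∈ V_k`. Then `H` has an independent set of cardinality `k + i - r - 1` iff
there are `x₁ ∈ V₁, …, x_k ∈ V_k` with `{x₁,…,x_k}` containing no hyperedge of `H*`. -/
theorem arity_sensitive_embedding (α : Type) [DecidableEq α] (k r i : ℕ)
    (hk : 1 ≤ k) (hr : 3 ≤ r) (hi : r + 1 ≤ i)
    (Vp : Fin k → Finset α)
    (hVp : ∀ j₁ j₂ : Fin k, j₁ ≠ j₂ → Disjoint (Vp j₁) (Vp j₂))
    (Estar : Finset (Finset α))
    (hEstar : ∀ e ∈ Estar, e.card = r ∧ e ⊆ Finset.univ.biUnion Vp ∧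
      ∀ j : Fin k, (e ∩ Vp j).card ≤ 1)
    (d : Fin (i - r - 1) → α) (hd : Function.Injective d)
    (hdfresh : ∀ j : Fin k, Disjoint (Finset.image d Finset.univ) (Vp j)) :
    (∃ X : Finset α,
        X ⊆ Finset.univ.biUnion Vp ∪ Finset.image d Finset.univ ∧
        X.card = k + i - r - 1 ∧
        ∀ e ∈ (Estar.filter fun e => ∃ v ∈ Vp ⟨k - 1, by omega⟩, v ∈ e) ∪
            (Finset.univ.biUnion fun j : Fin k =>
              ((Vp j ×ˢ Vp j).filter fun q => q.1 ≠ q.2).image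
                fun q => ({q.1, q.2} : Finset α)) ∪
            ((Estar ×ˢ Vp ⟨k - 1, by omega⟩).image fun q =>
              insert q.2 (Finset.image d Finset.univ ∪ q.1)),
          ¬ e ⊆ X) ↔
      ∃ x : Fin k → α, (∀ j : Fin k, x j ∈ Vp j) ∧
        ∀ e ∈ Estar, ¬ e ⊆ Finset.image x Finset.univ := by
  classical
  set D := Finset.image d Finset.univ with hD
  have hDcard : D.card = i - r - 1 := by
    rw [hD, Finset.card_image_of_injective _ hd, Finset.card_univ, Fintype.card_fin]
  constructor
  · rintro ⟨X, hXsub, hXcard, hXind⟩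
    -- at most one vertex of X per part
    have hone : ∀ j : Fin k, (X ∩ Vp j).card ≤ 1 := by
      intro j
      by_contra h
      push_neg at h
      obtain ⟨a, ha, b, hb, hab⟩ := Finset.one_lt_card.mp h
      have haX : a ∈ X := (Finset.mem_inter.mp ha).1
      have haV : a ∈ Vp j := (Finset.mem_inter.mp ha).2
      have hbX : b ∈ X := (Finset.mem_inter.mp hb).1
      have hbV : b ∈ Vp j := (Finset.mem_inter.mp hb).2
      apply hXind ({a, b} : Finset α)
      · refine Finset.mem_union.mpr (Or.inl (Finset.mem_union.mpr (Or.inr ?_)))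
        refine Finset.mem_biUnion.mpr ⟨j, Finset.mem_univ _, ?_⟩
        refine Finset.mem_image.mpr ⟨(a, b), ?_, rfl⟩
        exact Finset.mem_filter.mpr ⟨Finset.mem_product.mpr ⟨haV, hbV⟩, hab⟩
      · intro c hc
        rcases Finset.mem_insert.mp hc with rfl | hc
        · exact haX
        · rw [Finset.mem_singleton.mp hc]; exact hbX
    have hXeq : X = (X ∩ Finset.univ.biUnion Vp) ∪ (X ∩ D) := by
      rw [← Finset.inter_union_distrib_left]
      exact (Finset.inter_eq_left.mpr hXsub).symm
    have hXBsub : X ∩ Finset.univ.biUnion Vp ⊆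
        Finset.univ.biUnion (fun j => X ∩ Vp j) := by
      intro a ha
      obtain ⟨haX, haB⟩ := Finset.mem_inter.mp ha
      obtain ⟨j, _, hj⟩ := Finset.mem_biUnion.mp haB
      exact Finset.mem_biUnion.mpr ⟨j, Finset.mem_univ _, Finset.mem_inter.mpr ⟨haX, hj⟩⟩
    have hBle : (X ∩ Finset.univ.biUnion Vp).card ≤ ∑ j : Fin k, (X ∩ Vp j).card :=
      le_trans (Finset.card_le_card hXBsub) (Finset.card_biUnion_le)
    have hsumle : ∑ j : Fin k, (X ∩ Vp j).card ≤ k := by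
      calc ∑ j : Fin k, (X ∩ Vp j).card ≤ ∑ _j : Fin k, 1 :=
            Finset.sum_le_sum (fun j _ => hone j)
        _ = k := by simp
    have hcardsplit : X.card ≤ (X ∩ Finset.univ.biUnion Vp).card + (X ∩ D).card := by
      calc X.card = ((X ∩ Finset.univ.biUnion Vp) ∪ (X ∩ D)).card := by rw [← hXeq]
        _ ≤ _ := Finset.card_union_le _ _
    have hXDle : (X ∩ D).card ≤ i - r - 1 := by
      rw [← hDcard]; exact Finset.card_le_card (Finset.inter_subset_right)
    have hBk : k ≤ (X ∩ Finset.univ.biUnion Vp).card := by omega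
    have hXD : D ⊆ X := by
      have h1 : (X ∩ D).card ≥ D.card := by omega
      have h2 : X ∩ D = D :=
        Finset.eq_of_subset_of_card_le (Finset.inter_subset_right) h1
      intro a ha
      have : a ∈ X ∩ D := h2.symm ▸ ha
      exact (Finset.mem_inter.mp this).1
    have hcard1 : ∀ j : Fin k, (X ∩ Vp j).card = 1 := by
      intro j
      by_contra hne
      have h0 : (X ∩ Vp j).card = 0 := by have := hone j; omega
      have hlt : ∑ j' : Fin k, (X ∩ Vp j').card < ∑ _j' : Fin k, 1 := by
        apply Finset.sum_lt_sum (fun j' _ => hone j')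
        exact ⟨j, Finset.mem_univ _, by omega⟩
      simp only [Finset.sum_const, Finset.card_univ, Fintype.card_fin, smul_eq_mul,
        mul_one] at hlt
      omega
    have hx : ∀ j : Fin k, ∃ a, X ∩ Vp j = {a} :=
      fun j => Finset.card_eq_one.mp (hcard1 j)
    choose x hxspec using hx
    have hxmem : ∀ j : Fin k, x j ∈ X ∩ Vp j := by
      intro j; rw [hxspec j]; exact Finset.mem_singleton_self _
    refine ⟨x, fun j => (Finset.mem_inter.mp (hxmem j)).2, ?_⟩
    intro e he hesub
    apply hXind (insert (x ⟨k - 1, by omega⟩) (D ∪ e))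
    · refine Finset.mem_union.mpr (Or.inr ?_)
      refine Finset.mem_image.mpr ⟨(e, x ⟨k - 1, by omega⟩), ?_, rfl⟩
      exact Finset.mem_product.mpr ⟨he, (Finset.mem_inter.mp (hxmem ⟨k - 1, by omega⟩)).2⟩
    · intro a ha
      rcases Finset.mem_insert.mp ha with rfl | ha
      · exact (Finset.mem_inter.mp (hxmem _)).1
      · rcases Finset.mem_union.mp ha with ha | ha
        · exact hXD ha
        · obtain ⟨j, _, rfl⟩ := Finset.mem_image.mp (hesub ha)
          exact (Finset.mem_inter.mp (hxmem j)).1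
  · rintro ⟨x, hxmem, hxind⟩
    have hxinj : Function.Injective x := by
      intro j₁ j₂ h
      by_contra hne
      have h1 : x j₂ ∈ Vp j₁ := h ▸ hxmem j₁
      exact Finset.disjoint_left.mp (hVp j₁ j₂ hne) h1 (hxmem j₂)
    set X := Finset.image x Finset.univ ∪ D with hX
    have key : ∀ a, ∀ j : Fin k, a ∈ X → a ∈ Vp j → a = x j := by
      intro a j haX haV
      have haD : a ∉ D := fun hD' => Finset.disjoint_left.mp (hdfresh j) hD' haV
      rcases Finset.mem_union.mp haX with h | h
      · obtain ⟨j', _, rfl⟩ := Finset.mem_image.mp h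
        have hjj : j' = j := by
          by_contra hne
          exact Finset.disjoint_left.mp (hVp j' j hne) (hxmem j') haV
        rw [hjj]
      · exact absurd h haD
    have toim : ∀ e ∈ Estar, e ⊆ X → e ⊆ Finset.image x Finset.univ := by
      intro e he hesub a ha
      obtain ⟨j, _, hj⟩ := Finset.mem_biUnion.mp ((hEstar e he).2.1 ha)
      have := key a j (hesub ha) hj
      exact Finset.mem_image.mpr ⟨j, Finset.mem_univ _, this.symm⟩
    refine ⟨X, ?_, ?_, ?_⟩
    · apply Finset.union_subset_union _ le_rfl
      intro a ha
      obtain ⟨j, _, rfl⟩ := Finset.mem_image.mp ha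
      exact Finset.mem_biUnion.mpr ⟨j, Finset.mem_univ _, hxmem j⟩
    · have hdisj : Disjoint (Finset.image x Finset.univ) D := by
        rw [Finset.disjoint_left]
        intro a ha haD
        obtain ⟨j, _, rfl⟩ := Finset.mem_image.mp ha
        exact Finset.disjoint_left.mp (hdfresh j) haD (hxmem j)
      rw [hX, Finset.card_union_of_disjoint hdisj, hDcard,
        Finset.card_image_of_injective _ hxinj, Finset.card_univ, Fintype.card_fin]
      omega
    · intro e he hesub
      rcases Finset.mem_union.mp he with he | he
      · rcases Finset.mem_union.mp he with he | he
        · simp only [Finset.mem_filter] at he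
          exact hxind e he.1 (toim e he.1 hesub)
        · obtain ⟨j, -, he⟩ := Finset.mem_biUnion.mp he
          obtain ⟨q, hq, rfl⟩ := Finset.mem_image.mp he
          obtain ⟨hq1, hq2⟩ := Finset.mem_filter.mp hq
          obtain ⟨h1, h2⟩ := Finset.mem_product.mp hq1
          have e1 : q.1 = x j := key q.1 j (hesub (Finset.mem_insert_self _ _)) h1
          have e2 : q.2 = x j := key q.2 j
            (hesub (Finset.mem_insert.mpr (Or.inr (Finset.mem_singleton_self _)))) h2
          exact hq2 (e1.trans e2.symm)
      · obtain ⟨q, hq, rfl⟩ := Finset.mem_image.mp he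
        obtain ⟨h1, -⟩ := Finset.mem_product.mp hq
        have hsub' : q.1 ⊆ X := fun a ha =>
          hesub (Finset.mem_insert.mpr (Or.inr (Finset.mem_union_right _ ha)))
        exact hxind q.1 h1 (toim q.1 h1 hsub')
end

section
/- Let k ≥ 2, i ≥ 3 and n ≥ 1 be integers. Let H* be a k-partite 3-uniform hypergraph with pairwise disjoint parts V₁,…,V_k and hyperedge set E*, and let d₁,…,d_{i−3} and p₁,…,p_n be distinct fresh vertices. Define the hypergraph H with vertex set V₁ ∪ ⋯ ∪ V_k ∪ {d₁,…,d_{i−3}} ∪ {p₁,…,p_n} and hyperedge set { {p_s, v} : 1 ≤ s ≤ n, v a vertex of H, v ≠ p_s } ∪ ⋃_{j=1}^{k} { all 2-element subsets of V_j } ∪ { {d₁,…,d_{i−3}} ∪ e : e ∈ E* }. Then H contains an independent set of cardinality k + i − 3 if and only if there exist x₁ ∈ V₁, …, x_k ∈ V_k such that {x₁,…,x_k} contains no hyperedge of H*. -/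
attribute [local instance] Classical.propDecidable

/-- **Sparse embedding for the 3-uniform hyperclique lower bound.** Let `k ≥ 2`, `i ≥ 3`,
`n ≥ 1`. Given a `k`-partite 3-uniform hypergraph `H*` with pairwise disjoint parts
`V₁, …, V_k` and hyperedge set `E*`, fresh distinct dummy vertices `d₁, …, d_{i-3}` and padding
vertices `p₁, …, p_n`, form the hypergraph `H` with vertex set
`V₁ ∪ ⋯ ∪ V_k ∪ {d₁,…,d_{i-3}} ∪ {p₁,…,p_n}` and hyperedges: `{p_s, v}` for every vertex `v`
of `H` with `v ≠ p_s`, all 2-element subsets within each part, and the sets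
`{d₁,…,d_{i-3}} ∪ e` for `e ∈ E*`. Then `H` has an independent set of cardinality `k + i - 3`
iff there are `x₁ ∈ V₁, …, x_k ∈ V_k` with `{x₁,…,x_k}` containing no hyperedge of `H*`. -/
theorem sparse_embedding_mixed_arity (α : Type) [DecidableEq α] (k i n : ℕ)
    (hk : 2 ≤ k) (hi : 3 ≤ i) (hn : 1 ≤ n)
    (Vp : Fin k → Finset α)
    (hVp : ∀ j₁ j₂ : Fin k, j₁ ≠ j₂ → Disjoint (Vp j₁) (Vp j₂))
    (Estar : Finset (Finset α))
    (hEstar : ∀ e ∈ Estar, e.card = 3 ∧ e ⊆ Finset.univ.biUnion Vp ∧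
      ∀ j : Fin k, (e ∩ Vp j).card ≤ 1)
    (d : Fin (i - 3) → α) (hd : Function.Injective d)
    (p : Fin n → α) (hp : Function.Injective p)
    (hdfresh : ∀ j : Fin k, Disjoint (Finset.image d Finset.univ) (Vp j))
    (hpfresh : ∀ j : Fin k, Disjoint (Finset.image p Finset.univ) (Vp j))
    (hdp : Disjoint (Finset.image d Finset.univ) (Finset.image p Finset.univ)) :
    (∃ X : Finset α,
        X ⊆ Finset.univ.biUnion Vp ∪ Finset.image d Finset.univ ∪ Finset.image p Finset.univ ∧
        X.card = k + i - 3 ∧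
        ∀ e ∈ ((Finset.image p Finset.univ ×ˢ
              (Finset.univ.biUnion Vp ∪ Finset.image d Finset.univ ∪
                Finset.image p Finset.univ)).filter fun q => q.2 ≠ q.1).image
              (fun q => ({q.1, q.2} : Finset α)) ∪
            (Finset.univ.biUnion fun j : Fin k =>
              ((Vp j ×ˢ Vp j).filter fun q => q.1 ≠ q.2).image
                fun q => ({q.1, q.2} : Finset α)) ∪
            (Estar.image fun e => Finset.image d Finset.univ ∪ e),
          ¬ e ⊆ X) ↔
      ∃ x : Fin k → α, (∀ j : Fin k, x j ∈ Vp j) ∧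
        ∀ e ∈ Estar, ¬ e ⊆ Finset.image x Finset.univ := by
  classical
  have hDcard : (Finset.image d Finset.univ).card = i - 3 := by
    rw [Finset.card_image_of_injective _ hd, Finset.card_univ, Fintype.card_fin]
  constructor
  · rintro ⟨X, hXsub, hXcard, hXind⟩
    -- no padding vertex in X
    have hP : ∀ s : Fin n, p s ∉ X := by
      intro s hs
      obtain ⟨v, hv, hvne⟩ : ∃ v ∈ X, v ≠ p s :=
        Finset.exists_mem_ne (by omega) (p s)
      refine hXind {p s, v} ?_ ?_
      · refine Finset.mem_union_left _ (Finset.mem_union_left _ ?_)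
        refine Finset.mem_image.mpr ⟨(p s, v), ?_, rfl⟩
        refine Finset.mem_filter.mpr ⟨Finset.mem_product.mpr ⟨?_, hXsub hv⟩, hvne⟩
        exact Finset.mem_image.mpr ⟨s, Finset.mem_univ s, rfl⟩
      · intro t ht
        rcases Finset.mem_insert.mp ht with h | h
        · exact h ▸ hs
        · exact (Finset.mem_singleton.mp h) ▸ hv
    have hXVD : X ⊆ Finset.univ.biUnion Vp ∪ Finset.image d Finset.univ := by
      intro a ha
      rcases Finset.mem_union.mp (hXsub ha) with h | h
      · exact h
      · obtain ⟨s, _, rfl⟩ := Finset.mem_image.mp h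
        exact absurd ha (hP s)
    -- at most one vertex per part
    have hVj : ∀ j : Fin k, (X ∩ Vp j).card ≤ 1 := by
      intro j
      by_contra hc
      have hc2 : 1 < (X ∩ Vp j).card := by omega
      obtain ⟨a, ha, b, hb, hab⟩ := Finset.one_lt_card.mp hc2
      refine hXind {a, b} ?_ ?_
      · refine Finset.mem_union_left _ (Finset.mem_union_right _ ?_)
        refine Finset.mem_biUnion.mpr ⟨j, Finset.mem_univ j, ?_⟩
        refine Finset.mem_image.mpr ⟨(a, b), ?_, rfl⟩
        exact Finset.mem_filter.mpr ⟨Finset.mem_product.mpr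
          ⟨(Finset.mem_inter.mp ha).2, (Finset.mem_inter.mp hb).2⟩, hab⟩
      · intro t ht
        rcases Finset.mem_insert.mp ht with h | h
        · exact h ▸ (Finset.mem_inter.mp ha).1
        · exact (Finset.mem_singleton.mp h) ▸ (Finset.mem_inter.mp hb).1
    -- counting
    have hXsplit : X ⊆ (X ∩ Finset.univ.biUnion Vp) ∪ (X ∩ Finset.image d Finset.univ) := by
      intro a ha
      rcases Finset.mem_union.mp (hXVD ha) with h | h
      · exact Finset.mem_union_left _ (Finset.mem_inter.mpr ⟨ha, h⟩)
      · exact Finset.mem_union_right _ (Finset.mem_inter.mpr ⟨ha, h⟩)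
    have hXV_eq : X ∩ Finset.univ.biUnion Vp
        = Finset.univ.biUnion (fun j => X ∩ Vp j) := by
      ext a
      simp [Finset.mem_biUnion, Finset.mem_inter, and_assoc]
    have hsum_le : (X ∩ Finset.univ.biUnion Vp).card ≤ k := by
      rw [hXV_eq]
      calc (Finset.univ.biUnion (fun j => X ∩ Vp j)).card
          ≤ ∑ j : Fin k, (X ∩ Vp j).card := Finset.card_biUnion_le
        _ ≤ ∑ _j : Fin k, 1 := Finset.sum_le_sum (fun j _ => hVj j)
        _ = k := by simp
    have hXD_le : (X ∩ Finset.image d Finset.univ).card ≤ i - 3 := by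
      calc (X ∩ Finset.image d Finset.univ).card
          ≤ (Finset.image d Finset.univ).card :=
            Finset.card_le_card Finset.inter_subset_right
        _ = i - 3 := hDcard
    have hkey : X.card ≤ (X ∩ Finset.univ.biUnion Vp).card
        + (X ∩ Finset.image d Finset.univ).card :=
      le_trans (Finset.card_le_card hXsplit) (Finset.card_union_le _ _)
    have hXVcard : (X ∩ Finset.univ.biUnion Vp).card = k := by omega
    have hXDcard : (X ∩ Finset.image d Finset.univ).card = i - 3 := by omega
    have hDX : Finset.image d Finset.univ ⊆ X := by
      have h1 : X ∩ Finset.image d Finset.univ = Finset.image d Finset.univ :=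
        Finset.eq_of_subset_of_card_le Finset.inter_subset_right
          (le_of_eq (hDcard.trans hXDcard.symm))
      exact Finset.inter_eq_right.mp h1
    -- each part contributes exactly one
    have hsum_eq : ∑ j : Fin k, (X ∩ Vp j).card = k := by
      have hdisj : ∀ j₁ ∈ (Finset.univ : Finset (Fin k)), ∀ j₂ ∈ Finset.univ,
          j₁ ≠ j₂ → Disjoint (X ∩ Vp j₁) (X ∩ Vp j₂) := by
        intro j₁ _ j₂ _ hne
        exact Finset.disjoint_of_subset_left Finset.inter_subset_right
          (Finset.disjoint_of_subset_right Finset.inter_subset_right (hVp j₁ j₂ hne))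
      rw [← Finset.card_biUnion hdisj, ← hXV_eq, hXVcard]
    have hone : ∀ j : Fin k, (X ∩ Vp j).card = 1 := by
      intro j
      by_contra hne
      have hlt : (X ∩ Vp j).card = 0 := by have := hVj j; omega
      have : ∑ j' : Fin k, (X ∩ Vp j').card
          = (X ∩ Vp j).card + ∑ j' ∈ Finset.univ.erase j, (X ∩ Vp j').card := by
        rw [← Finset.sum_erase_add _ _ (Finset.mem_univ j)]; omega
      have hrest : ∑ j' ∈ Finset.univ.erase j, (X ∩ Vp j').card ≤ k - 1 := by
        calc ∑ j' ∈ Finset.univ.erase j, (X ∩ Vp j').card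
            ≤ ∑ _j' ∈ Finset.univ.erase j, 1 :=
              Finset.sum_le_sum (fun j' _ => hVj j')
          _ = (Finset.univ.erase j).card := by simp
          _ = k - 1 := by rw [Finset.card_erase_of_mem (Finset.mem_univ j)]; simp
      omega
    have hx1 : ∀ j : Fin k, ∃ a, X ∩ Vp j = {a} := fun j => Finset.card_eq_one.mp (hone j)
    choose x hx using hx1
    have hxmem : ∀ j, x j ∈ X ∩ Vp j := fun j => (hx j) ▸ Finset.mem_singleton_self (x j)
    refine ⟨x, fun j => (Finset.mem_inter.mp (hxmem j)).2, ?_⟩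
    intro e he hesub
    refine hXind (Finset.image d Finset.univ ∪ e) ?_ ?_
    · exact Finset.mem_union_right _ (Finset.mem_image.mpr ⟨e, he, rfl⟩)
    · refine Finset.union_subset hDX (hesub.trans ?_)
      intro a ha
      obtain ⟨j, _, rfl⟩ := Finset.mem_image.mp ha
      exact (Finset.mem_inter.mp (hxmem j)).1
  · rintro ⟨x, hxV, hxE⟩
    have hxinj : Function.Injective x := by
      intro j₁ j₂ hj
      by_contra hne
      exact Finset.disjoint_left.mp (hVp j₁ j₂ hne) (hxV j₁) (hj ▸ hxV j₂)
    have hxD : Disjoint (Finset.image x Finset.univ) (Finset.image d Finset.univ) := by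
      rw [Finset.disjoint_left]
      intro a ha had
      obtain ⟨j, _, rfl⟩ := Finset.mem_image.mp ha
      exact Finset.disjoint_left.mp (hdfresh j) had (hxV j)
    refine ⟨Finset.image x Finset.univ ∪ Finset.image d Finset.univ, ?_, ?_, ?_⟩
    · intro a ha
      rcases Finset.mem_union.mp ha with h | h
      · obtain ⟨j, _, rfl⟩ := Finset.mem_image.mp h
        exact Finset.mem_union_left _ (Finset.mem_union_left _
          (Finset.mem_biUnion.mpr ⟨j, Finset.mem_univ j, hxV j⟩))
      · exact Finset.mem_union_left _ (Finset.mem_union_right _ h)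
    · rw [Finset.card_union_of_disjoint hxD, hDcard,
        Finset.card_image_of_injective _ hxinj, Finset.card_univ, Fintype.card_fin]
      omega
    · intro e he hesub
      have hXnoP : ∀ s : Fin n, p s ∉ Finset.image x Finset.univ ∪ Finset.image d Finset.univ := by
        intro s hs
        rcases Finset.mem_union.mp hs with h | h
        · obtain ⟨j, _, hj⟩ := Finset.mem_image.mp h
          exact Finset.disjoint_left.mp (hpfresh j)
            (Finset.mem_image.mpr ⟨s, Finset.mem_univ s, rfl⟩) (hj ▸ hxV j)
        · exact Finset.disjoint_right.mp hdp
            (Finset.mem_image.mpr ⟨s, Finset.mem_univ s, rfl⟩) h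
      rcases Finset.mem_union.mp he with he' | he'
      · rcases Finset.mem_union.mp he' with h1 | h2
        · obtain ⟨⟨a, b⟩, hq, rfl⟩ := Finset.mem_image.mp h1
          have ha := (Finset.mem_product.mp (Finset.mem_filter.mp hq).1).1
          obtain ⟨s, _, rfl⟩ := Finset.mem_image.mp ha
          exact hXnoP s (hesub (Finset.mem_insert_self _ _))
        · obtain ⟨j, _, hj⟩ := Finset.mem_biUnion.mp h2
          obtain ⟨⟨a, b⟩, hq, rfl⟩ := Finset.mem_image.mp hj
          obtain ⟨hprod, hne⟩ := Finset.mem_filter.mp hq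
          have ha := (Finset.mem_product.mp hprod).1
          have hb := (Finset.mem_product.mp hprod).2
          have hmem : ∀ c, c ∈ Vp j →
              c ∈ Finset.image x Finset.univ ∪ Finset.image d Finset.univ → c = x j := by
            intro c hc hcX
            rcases Finset.mem_union.mp hcX with h | h
            · obtain ⟨j', _, rfl⟩ := Finset.mem_image.mp h
              by_contra hcne
              have hjj : j' ≠ j := fun hh => hcne (by rw [hh])
              exact Finset.disjoint_left.mp (hVp j' j hjj) (hxV j') hc
            · exact absurd hc (Finset.disjoint_left.mp (hdfresh j) h)
          have hae := hmem a ha (hesub (Finset.mem_insert_self _ _))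
          have hbe := hmem b hb (hesub (Finset.mem_insert.mpr (Or.inr (Finset.mem_singleton_self _))))
          exact hne (hae.trans hbe.symm)
      · obtain ⟨e', he'E, rfl⟩ := Finset.mem_image.mp he'
        refine hxE e' he'E ?_
        intro a ha
        have haX := hesub (Finset.mem_union_right _ ha)
        rcases Finset.mem_union.mp haX with h | h
        · exact h
        · obtain ⟨j', _, haV⟩ := Finset.mem_biUnion.mp ((hEstar e' he'E).2.1 ha)
          exact absurd haV (Finset.disjoint_left.mp (hdfresh j') h)
end

section
/- Let F be a finite family of non-trivial, 0-valid Boolean constraint functions, let k ∈ ℕ, and for each f ∈ F let ε_f > 0 and C_f > 0 be reals. Then there exists n₀ ∈ ℕ such that for all n ≥ n₀: every instance over F on n variables in which, for each f ∈ F, the number of f-constraints is at most C_f · n^{u_min(f) − ε_f}, admits a satisfying assignment of weight exactly k. -/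
section helpers
open Finset

lemma choose_step {n k : ℕ} (hkn : k ≤ n) :
    ∀ u ≤ k, Nat.choose n (k - u) * (n - k + 1) ^ u ≤ Nat.choose n k * k ^ u := by
  intro u
  induction u with
  | zero => simp
  | succ u ih =>
    intro hu
    have hu' : u ≤ k := Nat.le_of_succ_le hu
    have h1 : Nat.choose n (k - (u+1)) * (n - k + 1) ≤ Nat.choose n (k - u) * k := by
      have he : k - (u+1) + 1 = k - u := by omega
      have hch := Nat.choose_succ_right_eq n (k - (u+1))
      rw [he] at hch
      calc Nat.choose n (k - (u+1)) * (n - k + 1)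
          ≤ Nat.choose n (k - (u+1)) * (n - (k - (u+1))) :=
            Nat.mul_le_mul_left _ (by omega)
        _ = Nat.choose n (k - u) * (k - u) := hch.symm
        _ ≤ Nat.choose n (k - u) * k := Nat.mul_le_mul_left _ (by omega)

    calc Nat.choose n (k - (u+1)) * (n - k + 1) ^ (u+1)
        = (Nat.choose n (k - (u+1)) * (n - k + 1)) * (n - k + 1) ^ u := by ring
      _ ≤ (Nat.choose n (k - u) * k) * (n - k + 1) ^ u := Nat.mul_le_mul_right _ h1
      _ = k * (Nat.choose n (k - u) * (n - k + 1) ^ u) := by ring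
      _ ≤ k * (Nat.choose n k * k ^ u) := Nat.mul_le_mul_left _ (ih hu')
      _ = Nat.choose n k * k ^ (u+1) := by ring

lemma choose_bound {n k u : ℕ} (hkn : k ≤ n) (hn : 2 * k + 1 ≤ n) (hu : u ≤ k) :
    Nat.choose n (k - u) * n ^ u ≤ Nat.choose n k * (2 * k) ^ u := by
  have h2 : n ≤ 2 * (n - k + 1) := by omega
  calc Nat.choose n (k - u) * n ^ u
      ≤ Nat.choose n (k - u) * (2 * (n - k + 1)) ^ u :=
        Nat.mul_le_mul_left _ (Nat.pow_le_pow_left h2 u)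
    _ = 2 ^ u * (Nat.choose n (k - u) * (n - k + 1) ^ u) := by rw [mul_pow]; ring
    _ ≤ 2 ^ u * (Nat.choose n k * k ^ u) := Nat.mul_le_mul_left _ (choose_step hkn u hu)
    _ = Nat.choose n k * (2 * k) ^ u := by ring

lemma superset_count {n k : ℕ} (U : Finset (Fin n)) :
    (((Finset.univ : Finset (Fin n)).powersetCard k).filter (fun S => U ⊆ S)).card
      ≤ Nat.choose n (k - U.card) := by
  have : (((Finset.univ : Finset (Fin n)).powersetCard k).filter (fun S => U ⊆ S)).card
      ≤ ((Finset.univ : Finset (Fin n)).powersetCard (k - U.card)).card := by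
    apply Finset.card_le_card_of_injOn (fun S => S \ U)
    · intro S hS
      simp only [Finset.mem_coe, mem_filter, Finset.mem_powersetCard] at hS ⊢
      exact ⟨fun x _ => mem_univ x, by rw [card_sdiff_of_subset hS.2]; rw [hS.1.2]⟩
    · intro S1 h1 S2 h2 h
      simp only [coe_filter, Set.mem_setOf_eq] at h1 h2
      have h' : S1 \ U = S2 \ U := h
      have : S1 \ U ∪ U = S2 \ U ∪ U := by rw [h']
      rwa [sdiff_union_of_subset h1.2, sdiff_union_of_subset h2.2] at this
  simpa [Finset.card_powersetCard] using this

lemma bad_count {n k u : ℕ} (T : Finset (Fin n)) :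
    (((Finset.univ : Finset (Fin n)).powersetCard k).filter
        (fun S => u ≤ (S ∩ T).card)).card ≤ 2 ^ T.card * Nat.choose n (k - u) := by
  have hsub : ((Finset.univ : Finset (Fin n)).powersetCard k).filter
        (fun S => u ≤ (S ∩ T).card) ⊆
      (T.powersetCard u).biUnion (fun U =>
        ((Finset.univ : Finset (Fin n)).powersetCard k).filter (fun S => U ⊆ S)) := by
    intro S hS
    simp only [mem_filter] at hS
    obtain ⟨U, hUsub, hUcard⟩ := Finset.exists_subset_card_eq hS.2
    rw [Finset.mem_biUnion]
    refine ⟨U, ?_, ?_⟩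
    · rw [Finset.mem_powersetCard]
      exact ⟨hUsub.trans (inter_subset_right), hUcard⟩
    · exact mem_filter.2 ⟨hS.1, hUsub.trans (inter_subset_left)⟩
  calc _ ≤ _ := Finset.card_le_card hsub
    _ ≤ ∑ U ∈ T.powersetCard u,
        (((Finset.univ : Finset (Fin n)).powersetCard k).filter (fun S => U ⊆ S)).card :=
      Finset.card_biUnion_le
    _ ≤ ∑ U ∈ T.powersetCard u, Nat.choose n (k - u) := by
      apply Finset.sum_le_sum
      intro U hU
      have := superset_count (k := k) U
      rwa [(Finset.mem_powersetCard.1 hU).2] at this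
    _ = (T.powersetCard u).card * Nat.choose n (k - u) := by rw [Finset.sum_const, smul_eq_mul]
    _ ≤ 2 ^ T.card * Nat.choose n (k - u) := by
      apply Nat.mul_le_mul_right
      calc (T.powersetCard u).card ≤ T.powerset.card :=
          Finset.card_le_card (by
            intro x hx
            rw [Finset.mem_powerset]
            exact (Finset.mem_powersetCard.1 hx).1)
        _ = 2 ^ T.card := Finset.card_powerset T

lemma sum_small (ι : Type) [Fintype ι] (D ε : ι → ℝ) (hε : ∀ i, 0 < ε i) :
    ∃ N : ℕ, ∀ n ≥ N, (∑ i, D i * (n : ℝ) ^ (-(ε i))) < 1 := by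
  have h : Filter.Tendsto (fun n : ℕ => ∑ i, D i * (n : ℝ) ^ (-(ε i)))
      Filter.atTop (nhds 0) := by
    have h0 : (0 : ℝ) = ∑ _i : ι, (0 : ℝ) := by simp
    rw [h0]
    apply tendsto_finset_sum
    intro i _
    have := (tendsto_rpow_neg_atTop (hε i)).comp tendsto_natCast_atTop_atTop
    simpa using this.const_mul (D i)
  exact Filter.eventually_atTop.1 (h.eventually_lt_const one_pos)

end helpers

/-- **Sparse 0-valid CSPs are trivially satisfiable.** Let `F` be a finite family of
non-trivial, 0-valid Boolean constraint functions (indexed by `ι`, with `fn i` of arity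
`arity i` and minimum violating weight `u i`), let `k ∈ ℕ` and, for each `f ∈ F`, reals
`ε_f > 0` and `C_f > 0`. Then there is `n₀` such that for all `n ≥ n₀`, every instance over
`F` on `n` variables in which the number of `f`-constraints is at most `C_f · n^(u(f) - ε_f)`
admits a satisfying assignment of weight exactly `k`. -/
theorem sparse_zero_valid_csp_satisfiable (ι : Type) [Fintype ι] [DecidableEq ι]
    (arity : ι → ℕ) (fn : (i : ι) → (Fin (arity i) → Bool) → Bool)
    (h0valid : ∀ i : ι, fn i (fun _ => false) = true)
    (u : ι → ℕ)
    (hu_ex : ∀ i : ι, ∃ x : Fin (arity i) → Bool, fn i x = false ∧ bweight x = u i)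
    (hu_min : ∀ i : ι, ∀ x : Fin (arity i) → Bool, fn i x = false → u i ≤ bweight x)
    (k : ℕ) (ε C : ι → ℝ) (hε : ∀ i, 0 < ε i) (hC : ∀ i, 0 < C i) :
    ∃ n₀ : ℕ, ∀ n : ℕ, n₀ ≤ n →
      ∀ Φ : Finset ((i : ι) × (Fin (arity i) → Fin n)),
        (∀ p ∈ Φ, Function.Injective p.2) →
        (∀ i : ι, ((Φ.filter fun p => p.1 = i).card : ℝ) ≤
          C i * (n : ℝ) ^ ((u i : ℝ) - ε i)) →
        ∃ a : Fin n → Bool,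
          (Finset.univ.filter fun v => a v = true).card = k ∧
          ∀ p ∈ Φ, fn p.1 (fun j => a (p.2 j)) = true := by
  classical
  set D : ι → ℝ := fun i => C i * 2 ^ (arity i) * (2 * (k : ℝ)) ^ (u i) with hD
  obtain ⟨N, hN⟩ := sum_small ι D ε hε
  refine ⟨max N (2 * k + 1), fun n hn Φ hinj hcount => ?_⟩
  have h2k : 2 * k + 1 ≤ n := le_trans (le_max_right _ _) hn
  have hNn : N ≤ n := le_trans (le_max_left _ _) hn
  have hk : k ≤ n := by omega
  have hnpos : (0 : ℝ) < (n : ℝ) := by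
    have : 0 < n := by omega
    exact_mod_cast this
  set 𝒮 : Finset (Finset (Fin n)) := (Finset.univ : Finset (Fin n)).powersetCard k with h𝒮
  have hcard𝒮 : 𝒮.card = Nat.choose n k := by simp [h𝒮, Finset.card_powersetCard]
  set bad : ((i : ι) × (Fin (arity i) → Fin n)) → Finset (Finset (Fin n)) :=
    fun p => 𝒮.filter fun S => u p.1 ≤ (S ∩ (Finset.univ.image p.2)).card with hbad
  set t : ι → ℕ := fun i => if u i ≤ k then 2 ^ (arity i) * Nat.choose n (k - u i) else 0
    with ht
  have step1 : ∀ p ∈ Φ, (bad p).card ≤ t p.1 := by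
    intro p _
    by_cases hui : u p.1 ≤ k
    · simp only [ht, if_pos hui]
      calc (bad p).card ≤ 2 ^ (Finset.univ.image p.2).card * Nat.choose n (k - u p.1) :=
            bad_count _
        _ ≤ 2 ^ (arity p.1) * Nat.choose n (k - u p.1) := by
            apply Nat.mul_le_mul_right
            apply Nat.pow_le_pow_right (by norm_num)
            calc (Finset.univ.image p.2).card ≤ (Finset.univ : Finset (Fin (arity p.1))).card :=
                Finset.card_image_le
              _ = arity p.1 := by simp
    · simp only [ht, if_neg hui, Nat.le_zero, Finset.card_eq_zero]
      apply Finset.filter_eq_empty_iff.2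
      intro S hS
      have hScard : S.card = k := (Finset.mem_powersetCard.1 hS).2
      have : (S ∩ (Finset.univ.image p.2)).card ≤ k := by
        calc (S ∩ (Finset.univ.image p.2)).card ≤ S.card :=
            Finset.card_le_card Finset.inter_subset_left
          _ = k := hScard
      omega
  set Bad : Finset (Finset (Fin n)) := Φ.biUnion bad with hBadDef
  have hBadnat : Bad.card ≤ ∑ i : ι, (Φ.filter fun p => p.1 = i).card * t i := by
    calc Bad.card ≤ ∑ p ∈ Φ, (bad p).card := Finset.card_biUnion_le
      _ ≤ ∑ p ∈ Φ, t p.1 := Finset.sum_le_sum step1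
      _ = ∑ i : ι, ∑ p ∈ Φ.filter (fun p => p.1 = i), t i := by
          rw [Finset.sum_fiberwise_of_maps_to' (fun p _ => Finset.mem_univ p.1)]
      _ = ∑ i : ι, (Φ.filter fun p => p.1 = i).card * t i := by
          refine Finset.sum_congr rfl fun i _ => ?_
          rw [Finset.sum_const, smul_eq_mul]
  have hterm : ∀ i : ι, ((Φ.filter fun p => p.1 = i).card : ℝ) * (t i : ℝ) ≤
      D i * (n : ℝ) ^ (-(ε i)) * (Nat.choose n k : ℝ) := by
    intro i
    by_cases hui : u i ≤ k
    · have hX : (0 : ℝ) ≤ (n : ℝ) ^ (-(ε i)) := Real.rpow_nonneg hnpos.le _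
      have hnat := choose_bound hk h2k hui
      have hnatR : (Nat.choose n (k - u i) : ℝ) * (n : ℝ) ^ (u i) ≤
          (Nat.choose n k : ℝ) * (2 * (k : ℝ)) ^ (u i) := by
        have := hnat
        have h2 : ((Nat.choose n (k - u i) * n ^ u i : ℕ) : ℝ) ≤
            ((Nat.choose n k * (2 * k) ^ u i : ℕ) : ℝ) := Nat.cast_le.2 this
        push_cast at h2
        linarith
      have hsplit : (n : ℝ) ^ ((u i : ℝ) - ε i) = (n : ℝ) ^ (u i) * (n : ℝ) ^ (-(ε i)) := by
        rw [show (u i : ℝ) - ε i = (u i : ℝ) + (-(ε i)) by ring, Real.rpow_add hnpos,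
          Real.rpow_natCast]
      calc ((Φ.filter fun p => p.1 = i).card : ℝ) * (t i : ℝ)
          ≤ (C i * (n : ℝ) ^ ((u i : ℝ) - ε i)) * (t i : ℝ) := by
            apply mul_le_mul_of_nonneg_right (hcount i) (Nat.cast_nonneg _)
        _ = (C i * 2 ^ (arity i) * (n : ℝ) ^ (-(ε i))) *
            ((Nat.choose n (k - u i) : ℝ) * (n : ℝ) ^ (u i)) := by
            simp only [ht, if_pos hui]
            push_cast
            rw [hsplit]
            ring
        _ ≤ (C i * 2 ^ (arity i) * (n : ℝ) ^ (-(ε i))) *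
            ((Nat.choose n k : ℝ) * (2 * (k : ℝ)) ^ (u i)) := by
            apply mul_le_mul_of_nonneg_left hnatR
            have := (hC i).le
            positivity
        _ = D i * (n : ℝ) ^ (-(ε i)) * (Nat.choose n k : ℝ) := by
            simp only [hD]; ring
    · simp only [ht, if_neg hui]
      have : (0:ℝ) ≤ D i * (n : ℝ) ^ (-(ε i)) * (Nat.choose n k : ℝ) := by
        have h1 := (hC i).le
        have h2 : (0:ℝ) ≤ (n : ℝ) ^ (-(ε i)) := Real.rpow_nonneg hnpos.le _
        have h3 : (0:ℝ) ≤ D i := by simp only [hD]; positivity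
        positivity
      simpa using this
  have hBadR : (Bad.card : ℝ) < (Nat.choose n k : ℝ) := by
    have hchoosepos : (0 : ℝ) < (Nat.choose n k : ℝ) := by
      exact_mod_cast Nat.choose_pos hk
    calc (Bad.card : ℝ) ≤ ((∑ i : ι, (Φ.filter fun p => p.1 = i).card * t i : ℕ) : ℝ) :=
        Nat.cast_le.2 hBadnat
      _ = ∑ i : ι, ((Φ.filter fun p => p.1 = i).card : ℝ) * (t i : ℝ) := by push_cast; rfl
      _ ≤ ∑ i : ι, D i * (n : ℝ) ^ (-(ε i)) * (Nat.choose n k : ℝ) :=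
        Finset.sum_le_sum fun i _ => hterm i
      _ = (∑ i : ι, D i * (n : ℝ) ^ (-(ε i))) * (Nat.choose n k : ℝ) := by
        rw [Finset.sum_mul]
      _ < 1 * (Nat.choose n k : ℝ) :=
        mul_lt_mul_of_pos_right (hN n hNn) hchoosepos
      _ = (Nat.choose n k : ℝ) := by ring
  have hBadlt : Bad.card < 𝒮.card := by
    rw [hcard𝒮]; exact_mod_cast hBadR
  have hnotsub : ¬ 𝒮 ⊆ Bad := fun h =>
    absurd (Finset.card_le_card h) (not_le.2 hBadlt)
  obtain ⟨S, hS𝒮, hSBad⟩ := Finset.not_subset.1 hnotsub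
  refine ⟨fun v => decide (v ∈ S), ?_, ?_⟩
  · have : (Finset.univ.filter fun v => decide (v ∈ S) = true) = S := by
      ext v; simp
    rw [this]
    exact (Finset.mem_powersetCard.1 hS𝒮).2
  · intro p hp
    have hnb : ¬ (u p.1 ≤ (S ∩ (Finset.univ.image p.2)).card) := fun h =>
      hSBad (Finset.mem_biUnion.2 ⟨p, hp, Finset.mem_filter.2 ⟨hS𝒮, h⟩⟩)
    by_contra hfalse
    have hf : fn p.1 (fun j => decide (p.2 j ∈ S)) = false := by
      revert hfalse
      cases h : fn p.1 (fun j => decide (p.2 j ∈ S)) <;> simp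
    have hle := hu_min p.1 _ hf
    have hbw : bweight (fun j => decide (p.2 j ∈ S)) = (S ∩ (Finset.univ.image p.2)).card := by
      unfold bweight
      have h1 : (Finset.univ.filter fun j => decide (p.2 j ∈ S) = true) =
          (Finset.univ.filter fun j => p.2 j ∈ S) := by
        ext j; simp
      rw [h1]
      have h2 : ((Finset.univ : Finset (Fin (arity p.1))).image p.2).filter (· ∈ S) =
          (Finset.univ.filter fun j => p.2 j ∈ S).image p.2 := Finset.filter_image
      have h3 : ((Finset.univ.filter fun j => p.2 j ∈ S).image p.2).card =
          (Finset.univ.filter fun j => p.2 j ∈ S).card :=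
        Finset.card_image_of_injective _ (hinj p hp)
      rw [← h3, ← h2, Finset.filter_mem_eq_inter, Finset.inter_comm]
    rw [hbw] at hle
    exact hnb hle
end

section
/- Let F be a finite family of non-trivial Boolean constraint functions and let c := u_min(F). Then for every k ≥ c there exists a constant C > 0 and an n₀ ∈ ℕ such that for every n ≥ n₀ there is an instance over F on n variables with at least one and at most C · n^c constraints that admits no satisfying assignment of weight exactly k. -/
private def cidx {r c : ℕ} (x₀ : Fin r → Bool)
    (hO : (Finset.univ.filter fun j => x₀ j = true).card = c)
    (j : Fin r) (h : x₀ j = true) : Fin c :=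
  ((Finset.univ.filter fun j => x₀ j = true).orderIsoOfFin hO).symm
    ⟨j, Finset.mem_filter.mpr ⟨Finset.mem_univ j, h⟩⟩

private lemma cidx_inj {r c : ℕ} (x₀ : Fin r → Bool)
    (hO : (Finset.univ.filter fun j => x₀ j = true).card = c)
    {j j' : Fin r} (h : x₀ j = true) (h' : x₀ j' = true)
    (he : cidx x₀ hO j h = cidx x₀ hO j' h') : j = j' := by
  unfold cidx at he
  have := ((Finset.univ.filter fun j => x₀ j = true).orderIsoOfFin hO).symm.injective he
  exact congrArg Subtype.val this

private def cmap {r c n : ℕ} (x₀ : Fin r → Bool)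
    (hO : (Finset.univ.filter fun j => x₀ j = true).card = c)
    (t : ℕ) (e : Fin c ↪ Fin n)
    (hb : ∀ j : Fin r, t * r + (j : ℕ) < n) : Fin r → Fin n :=
  fun j => if h : x₀ j = true then e (cidx x₀ hO j h) else ⟨t * r + (j : ℕ), hb j⟩

private lemma cmap_inj {r c n : ℕ} (x₀ : Fin r → Bool)
    (hO : (Finset.univ.filter fun j => x₀ j = true).card = c)
    (t : ℕ) (e : Fin c ↪ Fin n) (hb : ∀ j : Fin r, t * r + (j : ℕ) < n)
    (hav : ∀ m : Fin c, ¬ (t * r ≤ (e m : ℕ) ∧ (e m : ℕ) < t * r + r)) :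
    Function.Injective (cmap x₀ hO t e hb) := by
  intro j j' hjj'
  unfold cmap at hjj'
  by_cases h : x₀ j = true <;> by_cases h' : x₀ j' = true
  · rw [dif_pos h, dif_pos h'] at hjj'
    exact cidx_inj x₀ hO h h' (e.injective hjj')
  · rw [dif_pos h, dif_neg h'] at hjj'
    have hv : (e (cidx x₀ hO j h) : ℕ) = t * r + (j' : ℕ) := congrArg Fin.val hjj'
    have := j'.isLt
    exact absurd ⟨by rw [hv]; omega, by rw [hv]; omega⟩ (hav (cidx x₀ hO j h))
  · rw [dif_neg h, dif_pos h'] at hjj'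
    have hv : t * r + (j : ℕ) = (e (cidx x₀ hO j' h') : ℕ) := congrArg Fin.val hjj'
    have := j.isLt
    exact absurd ⟨by rw [← hv]; omega, by rw [← hv]; omega⟩ (hav (cidx x₀ hO j' h'))
  · rw [dif_neg h, dif_neg h'] at hjj'
    have hv : t * r + (j : ℕ) = t * r + (j' : ℕ) := congrArg Fin.val hjj'
    exact Fin.ext (by omega)

/-- **Non-triviality at the triviality cutoff.** Let `F` be a finite family of non-trivial
Boolean constraint functions (indexed by `ι`) and let `c = u_min(F)` (characterized by `hc_lb`
and `hc_ex`). Then for every `k ≥ c` there exist a constant `C > 0` and `n₀` such that for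
every `n ≥ n₀` there is an instance over `F` on `n` variables, with at least one and at most
`C · n^c` constraints, admitting no satisfying assignment of weight exactly `k`. -/
theorem non_trivial_at_cutoff (ι : Type) [Fintype ι] [DecidableEq ι]
    (arity : ι → ℕ) (fn : (i : ι) → (Fin (arity i) → Bool) → Bool)
    (hnontrivial : ∀ i : ι, ∃ x : Fin (arity i) → Bool, fn i x = false)
    (c : ℕ)
    (hc_lb : ∀ i : ι, ∀ x : Fin (arity i) → Bool, fn i x = false → c ≤ bweight x)
    (hc_ex : ∃ i : ι, ∃ x : Fin (arity i) → Bool, fn i x = false ∧ bweight x = c)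
    (k : ℕ) (hk : c ≤ k) :
    ∃ C : ℝ, 0 < C ∧ ∃ n₀ : ℕ, ∀ n : ℕ, n₀ ≤ n →
      ∃ Φ : Finset ((i : ι) × (Fin (arity i) → Fin n)),
        (∀ p ∈ Φ, Function.Injective p.2) ∧
        Φ.Nonempty ∧
        ((Φ.card : ℝ) ≤ C * (n : ℝ) ^ c) ∧
        ¬ ∃ a : Fin n → Bool,
            (Finset.univ.filter fun v => a v = true).card = k ∧
            ∀ p ∈ Φ, fn p.1 (fun j => a (p.2 j)) = true := by
  classical
  obtain ⟨i₀, x₀, hf₀, hw₀⟩ := hc_ex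
  have hO : (Finset.univ.filter fun j => x₀ j = true).card = c := hw₀
  refine ⟨(k + 1 : ℝ), by positivity, (k + 1) * arity i₀ + c, fun n hn => ?_⟩
  have hb : ∀ t : Fin (k + 1), ∀ j : Fin (arity i₀),
      (t : ℕ) * arity i₀ + (j : ℕ) < n := by
    intro t j
    have h1 : ((t : ℕ) + 1) * arity i₀ ≤ (k + 1) * arity i₀ :=
      Nat.mul_le_mul_right _ (by have := t.isLt; omega)
    have h2 : (t : ℕ) * arity i₀ + (j : ℕ) < ((t : ℕ) + 1) * arity i₀ := by
      rw [Nat.succ_mul]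
      exact Nat.add_lt_add_left j.isLt _
    omega
  set D : Finset (Fin (k + 1) × (Fin c ↪ Fin n)) :=
    Finset.univ.filter (fun te => ∀ m : Fin c,
      ¬ ((te.1 : ℕ) * arity i₀ ≤ (te.2 m : ℕ) ∧
         (te.2 m : ℕ) < (te.1 : ℕ) * arity i₀ + arity i₀)) with hD
  set F : Fin (k + 1) × (Fin c ↪ Fin n) → ((i : ι) × (Fin (arity i) → Fin n)) :=
    fun te => ⟨i₀, cmap x₀ hO (te.1 : ℕ) te.2 (hb te.1)⟩ with hF
  refine ⟨D.image F, ?_, ?_, ?_, ?_⟩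
  · -- injectivity of each scope
    intro p hp
    obtain ⟨te, hte, rfl⟩ := Finset.mem_image.mp hp
    have hav := (Finset.mem_filter.mp hte).2
    exact cmap_inj x₀ hO _ _ _ hav
  · -- nonemptiness
    have hcn : (k + 1) * arity i₀ + c ≤ n := hn
    have hle : arity i₀ ≤ (k + 1) * arity i₀ := Nat.le_mul_of_pos_left _ (by omega)
    refine ⟨F (0, ⟨fun m => ⟨(k + 1) * arity i₀ + (m : ℕ), by have := m.isLt; omega⟩,
      fun m m' hmm' => Fin.ext (by have := congrArg Fin.val hmm'; simp at this; omega)⟩),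
      Finset.mem_image_of_mem F ?_⟩
    refine Finset.mem_filter.mpr ⟨Finset.mem_univ _, fun m => ?_⟩
    simp only [Function.Embedding.coeFn_mk, Fin.val_zero, zero_mul, zero_add]
    have := m.isLt
    change ¬ (_ ≤ (k + 1) * arity i₀ + (m : ℕ) ∧ (k + 1) * arity i₀ + (m : ℕ) < _)
    omega
  · -- cardinality bound
    have h1 : (D.image F).card ≤ D.card := Finset.card_image_le
    have h2 : D.card ≤ Fintype.card (Fin (k + 1) × (Fin c ↪ Fin n)) := by
      rw [← Finset.card_univ, hD]
      exact Finset.card_filter_le _ _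
    have h3 : Fintype.card (Fin (k + 1) × (Fin c ↪ Fin n)) =
        (k + 1) * Nat.descFactorial n c := by
      simp [Fintype.card_prod, Fintype.card_embedding_eq, Fintype.card_fin]
    have h4 : Nat.descFactorial n c ≤ n ^ c := Nat.descFactorial_le_pow n c
    have h5 : (D.image F).card ≤ (k + 1) * n ^ c := by
      calc (D.image F).card ≤ (k + 1) * Nat.descFactorial n c := by omega
        _ ≤ (k + 1) * n ^ c := Nat.mul_le_mul_left _ h4
    calc ((D.image F).card : ℝ) ≤ (((k + 1) * n ^ c : ℕ) : ℝ) := by exact_mod_cast h5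
      _ = (k + 1 : ℝ) * (n : ℝ) ^ c := by push_cast; ring
  · -- unsatisfiability at weight k
    rintro ⟨a, haw, hsat⟩
    set T : Finset (Fin n) := Finset.univ.filter (fun v => a v = true) with hT
    have hTk : T.card = k := haw
    have hex : ∃ t : Fin (k + 1), ∀ v ∈ T,
        ¬ ((t : ℕ) * arity i₀ ≤ (v : ℕ) ∧
           (v : ℕ) < (t : ℕ) * arity i₀ + arity i₀) := by
      by_contra hcon
      push_neg at hcon
      choose g hgT hg using hcon
      rcases Nat.eq_zero_or_pos (arity i₀) with hr0 | hrpos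
      · have h0 := hg 0
        rw [hr0] at h0
        omega
      · have hinj : Function.Injective (fun t : Fin (k + 1) => (⟨g t, hgT t⟩ : T)) := by
          intro t t' htt'
          have hval : (g t : ℕ) = (g t' : ℕ) :=
            congrArg (fun v : T => ((v : Fin n) : ℕ)) htt'
          have hg1 := hg t
          have hg2 := hg t'
          have d1 : (g t : ℕ) / arity i₀ = (t : ℕ) :=
            Nat.div_eq_of_lt_le hg1.1 (by rw [Nat.succ_mul]; exact hg1.2)
          have d2 : (g t' : ℕ) / arity i₀ = (t' : ℕ) :=
            Nat.div_eq_of_lt_le hg2.1 (by rw [Nat.succ_mul]; exact hg2.2)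
          exact Fin.ext (by rw [← d1, ← d2, hval])
        have hcard := Fintype.card_le_of_injective _ hinj
        simp only [Fintype.card_fin, Fintype.card_coe, hTk] at hcard
        omega
    obtain ⟨t, ht⟩ := hex
    obtain ⟨S, hST, hSc⟩ := Finset.exists_subset_card_eq (show c ≤ T.card by omega)
    let e : Fin c ↪ Fin n :=
      ⟨fun m => ((S.orderIsoOfFin hSc) m : Fin n),
        fun m m' h => (S.orderIsoOfFin hSc).injective (Subtype.ext h)⟩
    have heS : ∀ m, e m ∈ S := fun m => ((S.orderIsoOfFin hSc) m).2
    have hteD : (t, e) ∈ D :=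
      Finset.mem_filter.mpr ⟨Finset.mem_univ _, fun m => ht _ (hST (heS m))⟩
    have hin := hsat _ (Finset.mem_image_of_mem F hteD)
    change fn i₀ (fun j => a (cmap x₀ hO (t : ℕ) e (hb t) j)) = true at hin
    have hx : (fun j => a (cmap x₀ hO (t : ℕ) e (hb t) j)) = x₀ := by
      funext j
      by_cases h : x₀ j = true
      · rw [cmap]
        rw [dif_pos h, h]
        have hmemT : e (cidx x₀ hO j h) ∈ T := hST (heS _)
        exact (Finset.mem_filter.mp hmemT).2
      · rw [cmap]
        rw [dif_neg h]
        have hne : a ⟨(t : ℕ) * arity i₀ + (j : ℕ), hb t j⟩ ≠ true := by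
          intro ha
          have hmem : (⟨(t : ℕ) * arity i₀ + (j : ℕ), hb t j⟩ : Fin n) ∈ T :=
            Finset.mem_filter.mpr ⟨Finset.mem_univ _, ha⟩
          refine ht _ hmem ⟨Nat.le_add_right _ _, ?_⟩
          show (t : ℕ) * arity i₀ + (j : ℕ) < (t : ℕ) * arity i₀ + arity i₀
          have := j.isLt; omega
        have hfalse : a ⟨(t : ℕ) * arity i₀ + (j : ℕ), hb t j⟩ = false := by
          simpa using hne
        have hx0 : x₀ j = false := by simpa using h
        rw [hfalse, hx0]
    rw [hx, hf₀] at hin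
    exact absurd hin (by simp)
end

section
/- Let F be a finite family of non-trivial Boolean constraint functions, let k ∈ ℕ, and let C > 0 and ε > 0 be reals. Then there exists n₀ ∈ ℕ such that for all n ≥ n₀: every instance over F on n variables with at most C · n^{u_min(F) − ε} constraints in total admits a satisfying assignment of weight exactly k. -/
lemma choose_le_two_pow' (r c : ℕ) : r.choose c ≤ 2 ^ r := by
  rcases le_or_gt c r with h | h
  · calc r.choose c ≤ ∑ i ∈ Finset.range (r + 1), r.choose i :=
        Finset.single_le_sum (fun i _ => Nat.zero_le _) (Finset.mem_range.2 (Nat.lt_succ_of_le h))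
      _ = 2 ^ r := Nat.sum_range_choose r
  · rw [Nat.choose_eq_zero_of_lt h]; exact Nat.zero_le _

lemma pow_mul_choose_le (n k : ℕ) : ∀ c : ℕ, c ≤ k → k ≤ n →
    (n - c) ^ c * (n - c).choose (k - c) ≤ k ^ c * n.choose k := by
  intro c
  induction c with
  | zero => simp
  | succ c ih =>
    intro hck hkn
    have hc : c ≤ k := le_of_lt hck
    have hcn : c + 1 ≤ n := le_trans hck hkn
    have key : (n - c) * (n - (c+1)).choose (k - (c+1)) = (n - c).choose (k - c) * (k - c) := by
      have h1 : n - (c+1) + 1 = n - c := by omega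
      have h2 : k - (c+1) + 1 = k - c := by omega
      have := Nat.add_one_mul_choose_eq (n - (c+1)) (k - (c+1))
      rw [h1, h2] at this
      exact this
    calc (n - (c+1)) ^ (c+1) * (n - (c+1)).choose (k - (c+1))
        ≤ (n - c) ^ (c+1) * (n - (c+1)).choose (k - (c+1)) := by
          gcongr
          omega
      _ = (n - c) ^ c * ((n - c) * (n - (c+1)).choose (k - (c+1))) := by ring
      _ = (n - c) ^ c * ((n - c).choose (k - c) * (k - c)) := by rw [key]
      _ ≤ (n - c) ^ c * ((n - c).choose (k - c) * k) := by gcongr; omega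
      _ = ((n - c) ^ c * (n - c).choose (k - c)) * k := by ring
      _ ≤ (k ^ c * n.choose k) * k := Nat.mul_le_mul_right _ (ih hc hkn)
      _ = k ^ (c+1) * n.choose k := by ring

lemma card_supersets_le {n : ℕ} (k c : ℕ) (F : Finset (Fin n)) (hF : F.card = c) :
    (((Finset.univ : Finset (Fin n)).powersetCard k).filter fun S => F ⊆ S).card
      ≤ (n - c).choose (k - c) := by
  classical
  have : (((Finset.univ : Finset (Fin n)).powersetCard k).filter fun S => F ⊆ S).card
      ≤ ((Finset.univ \ F).powersetCard (k - c)).card := by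
    apply Finset.card_le_card_of_injOn (fun S => S \ F)
    · intro S hS
      simp only [Finset.mem_coe, Finset.mem_filter, Finset.mem_powersetCard] at hS ⊢
      obtain ⟨⟨hSu, hSc⟩, hFS⟩ := hS
      refine ⟨Finset.sdiff_subset_sdiff hSu le_rfl, ?_⟩
      rw [Finset.card_sdiff_of_subset hFS, hSc, hF]
    · intro S hS T hT hST
      simp only [Finset.coe_filter, Set.mem_setOf_eq, Finset.mem_powersetCard] at hS hT
      have hST' : S \ F = T \ F := hST
      have : S \ F ∪ F = T \ F ∪ F := by rw [hST']
      rwa [Finset.sdiff_union_of_subset hS.2, Finset.sdiff_union_of_subset hT.2] at this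
  rwa [Finset.card_powersetCard, Finset.card_sdiff_of_subset (Finset.subset_univ F),
    Finset.card_univ, Fintype.card_fin, hF] at this

lemma bweight_le_inter {n r : ℕ} (g : Fin r → Fin n) (hg : Function.Injective g)
    (S : Finset (Fin n)) :
    bweight (fun j => decide (g j ∈ S)) ≤ (S ∩ Finset.univ.image g).card := by
  classical
  unfold bweight
  apply Finset.card_le_card_of_injOn g
  · intro j hj
    simp only [Finset.mem_coe, Finset.mem_filter, Finset.mem_univ, true_and, decide_eq_true_eq] at hj
    simp only [Finset.mem_coe, Finset.mem_inter, Finset.mem_image]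
    exact ⟨hj, ⟨j, Finset.mem_univ j, rfl⟩⟩
  · exact fun a _ b _ h => hg h

lemma weight_indicator {n : ℕ} (S : Finset (Fin n)) :
    (Finset.univ.filter fun v => (decide (v ∈ S)) = true).card = S.card := by
  congr 1
  ext v
  simp


/-- **Triviality below the cutoff.** Let `F` be a finite family of non-trivial Boolean
constraint functions (indexed by `ι`) with `u_min(F) = c` (characterized by `hc_lb` and
`hc_ex`), let `k ∈ ℕ` and `C, ε > 0` be reals. Then there exists `n₀` such that for all
`n ≥ n₀`, every instance over `F` on `n` variables with at most `C · n^(c - ε)` constraints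
in total admits a satisfying assignment of weight exactly `k`. -/
theorem trivial_below_cutoff (ι : Type) [Fintype ι] [DecidableEq ι]
    (arity : ι → ℕ) (fn : (i : ι) → (Fin (arity i) → Bool) → Bool)
    (hnontrivial : ∀ i : ι, ∃ x : Fin (arity i) → Bool, fn i x = false)
    (c : ℕ)
    (hc_lb : ∀ i : ι, ∀ x : Fin (arity i) → Bool, fn i x = false → c ≤ bweight x)
    (hc_ex : ∃ i : ι, ∃ x : Fin (arity i) → Bool, fn i x = false ∧ bweight x = c)
    (k : ℕ) (C ε : ℝ) (hC : 0 < C) (hε : 0 < ε) :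
    ∃ n₀ : ℕ, ∀ n : ℕ, n₀ ≤ n →
      ∀ Φ : Finset ((i : ι) × (Fin (arity i) → Fin n)),
        (∀ p ∈ Φ, Function.Injective p.2) →
        ((Φ.card : ℝ) ≤ C * (n : ℝ) ^ ((c : ℝ) - ε)) →
        ∃ a : Fin n → Bool,
          (Finset.univ.filter fun v => a v = true).card = k ∧
          ∀ p ∈ Φ, fn p.1 (fun j => a (p.2 j)) = true := by
  classical
  rcases Nat.eq_zero_or_pos c with hc0 | hcpos
  · -- c = 0 : eventually there are no constraints at all
    subst hc0
    have htend : Filter.Tendsto (fun nn : ℕ => C * (nn : ℝ) ^ ((0 : ℝ) - ε))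
        Filter.atTop (nhds 0) := by
      have h1 : Filter.Tendsto (fun x : ℝ => x ^ (-ε)) Filter.atTop (nhds 0) :=
        tendsto_rpow_neg_atTop hε
      have h2 := (h1.comp tendsto_natCast_atTop_atTop).const_mul C
      simpa [zero_sub] using h2
    have hev : ∀ᶠ nn : ℕ in Filter.atTop, C * (nn : ℝ) ^ ((0 : ℝ) - ε) < 1 :=
      htend.eventually_lt_const one_pos
    obtain ⟨n₀, hn₀⟩ :=
      Filter.eventually_atTop.1 (hev.and (Filter.eventually_ge_atTop k))
    refine ⟨n₀, fun n hn Φ hinj hcard => ?_⟩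
    obtain ⟨hlt, hkn⟩ := hn₀ n hn
    have hΦ : Φ = ∅ := by
      rw [Nat.cast_zero] at hcard
      have h1 : (Φ.card : ℝ) < 1 := lt_of_le_of_lt hcard hlt
      have h2 : Φ.card = 0 := by exact_mod_cast Nat.lt_one_iff.1 (by exact_mod_cast h1)
      exact Finset.card_eq_zero.1 h2
    subst hΦ
    obtain ⟨S, -, hScard⟩ := Finset.exists_subset_card_eq
      (show k ≤ (Finset.univ : Finset (Fin n)).card by simpa using hkn)
    exact ⟨fun v => decide (v ∈ S), by rw [weight_indicator, hScard], by simp⟩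
  rcases lt_or_ge k c with hkc | hck
  · -- k < c : any weight-k assignment works
    refine ⟨k, fun n hn Φ hinj _ => ?_⟩
    obtain ⟨S, -, hScard⟩ := Finset.exists_subset_card_eq
      (show k ≤ (Finset.univ : Finset (Fin n)).card by simpa using hn)
    refine ⟨fun v => decide (v ∈ S), by rw [weight_indicator, hScard], ?_⟩
    intro p hp
    by_contra h
    have hf : fn p.1 (fun j => decide (p.2 j ∈ S)) = false := by
      simpa using h
    have h1 := hc_lb p.1 _ hf
    have h2 := bweight_le_inter p.2 (hinj p hp) S
    have h3 : (S ∩ Finset.univ.image p.2).card ≤ S.card :=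
      Finset.card_le_card Finset.inter_subset_left
    omega
  · -- main case : 1 ≤ c ≤ k, counting argument
    set R := (Finset.univ : Finset ι).sup arity with hR
    set D := C * 2 ^ R * (k : ℝ) ^ c * 2 ^ c with hD
    have hev : ∀ᶠ nn : ℕ in Filter.atTop, D < (nn : ℝ) ^ ε :=
      ((tendsto_rpow_atTop hε).comp tendsto_natCast_atTop_atTop).eventually_gt_atTop D
    obtain ⟨n₀, hn₀⟩ := Filter.eventually_atTop.1
      ((hev.and (Filter.eventually_ge_atTop (2 * c))).and (Filter.eventually_ge_atTop k))
    refine ⟨max n₀ 1, fun n hn Φ hinj hcard => ?_⟩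
    obtain ⟨⟨hDn, h2c⟩, hnk⟩ := hn₀ n (le_trans (le_max_left _ _) hn)
    have h1n : 1 ≤ n := le_trans (le_max_right _ _) hn
    have hcn : c ≤ n := by omega
    have hnpos : (0 : ℝ) < (n : ℝ) := by exact_mod_cast h1n
    -- key numeric inequality, first over ℝ
    have hkeyR : (Φ.card : ℝ) * 2 ^ R * (k : ℝ) ^ c < ((n - c : ℕ) : ℝ) ^ c := by
      have hstep1 : (Φ.card : ℝ) * 2 ^ R * (k : ℝ) ^ c * 2 ^ c ≤ D * (n : ℝ) ^ ((c : ℝ) - ε) := by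
        have h := mul_le_mul_of_nonneg_right hcard
          (show (0 : ℝ) ≤ 2 ^ R * (k : ℝ) ^ c * 2 ^ c by positivity)
        calc (Φ.card : ℝ) * 2 ^ R * (k : ℝ) ^ c * 2 ^ c
            = (Φ.card : ℝ) * (2 ^ R * (k : ℝ) ^ c * 2 ^ c) := by ring
          _ ≤ C * (n : ℝ) ^ ((c : ℝ) - ε) * (2 ^ R * (k : ℝ) ^ c * 2 ^ c) := h
          _ = D * (n : ℝ) ^ ((c : ℝ) - ε) := by rw [hD]; ring
      have hstep2 : D * (n : ℝ) ^ ((c : ℝ) - ε) < (n : ℝ) ^ c := by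
        have hmul : (n : ℝ) ^ ((c : ℝ) - ε) * (n : ℝ) ^ ε = (n : ℝ) ^ (c : ℕ) := by
          rw [← Real.rpow_add hnpos, sub_add_cancel, Real.rpow_natCast]
        calc D * (n : ℝ) ^ ((c : ℝ) - ε)
            < (n : ℝ) ^ ε * (n : ℝ) ^ ((c : ℝ) - ε) :=
              mul_lt_mul_of_pos_right hDn (Real.rpow_pos_of_pos hnpos _)
          _ = (n : ℝ) ^ (c : ℕ) := by rw [mul_comm]; exact hmul
      have hstep3 : (n : ℝ) ^ c ≤ (2 * ((n - c : ℕ) : ℝ)) ^ c := by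
        have hle : (n : ℝ) ≤ 2 * ((n - c : ℕ) : ℝ) := by
          have : (n : ℕ) ≤ 2 * (n - c) := by omega
          exact_mod_cast this
        exact pow_le_pow_left₀ (by positivity) hle c
      have hfin : (Φ.card : ℝ) * 2 ^ R * (k : ℝ) ^ c * 2 ^ c
          < ((n - c : ℕ) : ℝ) ^ c * 2 ^ c := by
        calc (Φ.card : ℝ) * 2 ^ R * (k : ℝ) ^ c * 2 ^ c
            ≤ D * (n : ℝ) ^ ((c : ℝ) - ε) := hstep1
          _ < (n : ℝ) ^ c := hstep2
          _ ≤ (2 * ((n - c : ℕ) : ℝ)) ^ c := hstep3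
          _ = ((n - c : ℕ) : ℝ) ^ c * 2 ^ c := by rw [mul_pow]; ring
      exact lt_of_mul_lt_mul_right hfin (by positivity)
    have hkeyN : Φ.card * 2 ^ R * k ^ c < (n - c) ^ c := by exact_mod_cast hkeyR
    -- counting
    set 𝒦 := (Finset.univ : Finset (Fin n)).powersetCard k with h𝒦def
    set I : ((i : ι) × (Fin (arity i) → Fin n)) → Finset (Fin n) :=
      fun p => Finset.univ.image p.2 with hIdef
    set Bad := 𝒦.filter (fun S => ∃ p ∈ Φ, c ≤ (S ∩ I p).card) with hBaddef
    have hBadsub : Bad ⊆ Φ.biUnion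
        (fun p => ((I p).powersetCard c).biUnion (fun F => 𝒦.filter (fun S => F ⊆ S))) := by
      intro S hS
      simp only [hBaddef, Finset.mem_filter] at hS
      obtain ⟨hSK, p, hp, hpc⟩ := hS
      obtain ⟨F, hF, hFc⟩ := Finset.exists_subset_card_eq hpc
      refine Finset.mem_biUnion.2 ⟨p, hp, Finset.mem_biUnion.2 ⟨F, ?_, ?_⟩⟩
      · exact Finset.mem_powersetCard.2 ⟨hF.trans Finset.inter_subset_right, hFc⟩
      · exact Finset.mem_filter.2 ⟨hSK, hF.trans Finset.inter_subset_left⟩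
    have hBadcard : Bad.card ≤ Φ.card * (2 ^ R * (n - c).choose (k - c)) := by
      calc Bad.card ≤ _ := Finset.card_le_card hBadsub
        _ ≤ ∑ p ∈ Φ, (((I p).powersetCard c).biUnion
              (fun F => 𝒦.filter (fun S => F ⊆ S))).card := Finset.card_biUnion_le
        _ ≤ ∑ _p ∈ Φ, 2 ^ R * (n - c).choose (k - c) := by
            apply Finset.sum_le_sum
            intro p hp
            calc (((I p).powersetCard c).biUnion (fun F => 𝒦.filter (fun S => F ⊆ S))).card
                ≤ ∑ F ∈ (I p).powersetCard c, (𝒦.filter (fun S => F ⊆ S)).card :=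
                  Finset.card_biUnion_le
              _ ≤ ∑ _F ∈ (I p).powersetCard c, (n - c).choose (k - c) := by
                  apply Finset.sum_le_sum
                  intro F hF
                  exact card_supersets_le k c F (Finset.mem_powersetCard.1 hF).2
              _ = ((I p).powersetCard c).card * (n - c).choose (k - c) := by
                  rw [Finset.sum_const, smul_eq_mul]
              _ ≤ 2 ^ R * (n - c).choose (k - c) := by
                  apply Nat.mul_le_mul_right
                  rw [Finset.card_powersetCard]
                  calc (I p).card.choose c ≤ 2 ^ (I p).card := choose_le_two_pow' _ _
                    _ ≤ 2 ^ R := by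
                        apply Nat.pow_le_pow_right (by norm_num)
                        calc (I p).card ≤ (Finset.univ : Finset (Fin (arity p.1))).card :=
                              Finset.card_image_le
                          _ = arity p.1 := by simp
                          _ ≤ R := Finset.le_sup (Finset.mem_univ p.1)
        _ = Φ.card * (2 ^ R * (n - c).choose (k - c)) := by
            rw [Finset.sum_const, smul_eq_mul]
    have h𝒦card : 𝒦.card = n.choose k := by
      rw [h𝒦def, Finset.card_powersetCard, Finset.card_univ, Fintype.card_fin]
    have hchoosepos : 0 < (n - c).choose (k - c) := Nat.choose_pos (by omega)
    have hlt : Bad.card < 𝒦.card := by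
      have hmul : Bad.card * k ^ c < n.choose k * k ^ c := by
        calc Bad.card * k ^ c
            ≤ (Φ.card * (2 ^ R * (n - c).choose (k - c))) * k ^ c :=
              Nat.mul_le_mul_right _ hBadcard
          _ = (Φ.card * 2 ^ R * k ^ c) * (n - c).choose (k - c) := by ring
          _ < (n - c) ^ c * (n - c).choose (k - c) :=
              mul_lt_mul_of_pos_right hkeyN hchoosepos
          _ ≤ k ^ c * n.choose k := pow_mul_choose_le n k c hck hnk
          _ = n.choose k * k ^ c := by ring
      have := lt_of_mul_lt_mul_right hmul (Nat.zero_le _)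
      omega
    have hne : (𝒦.filter (fun S => ¬ ∃ p ∈ Φ, c ≤ (S ∩ I p).card)).Nonempty := by
      rw [← Finset.card_pos]
      have := Finset.card_filter_add_card_filter_not
        (s := 𝒦) (p := fun S => ∃ p ∈ Φ, c ≤ (S ∩ I p).card)
      rw [← hBaddef] at this
      omega
    obtain ⟨S, hS⟩ := hne
    rw [Finset.mem_filter] at hS
    obtain ⟨hSK, hSgood⟩ := hS
    push_neg at hSgood
    have hScard : S.card = k := (Finset.mem_powersetCard.1 hSK).2
    refine ⟨fun v => decide (v ∈ S), by rw [weight_indicator, hScard], ?_⟩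
    intro p hp
    by_contra h
    have hf : fn p.1 (fun j => decide (p.2 j ∈ S)) = false := by simpa using h
    have h1 := hc_lb p.1 _ hf
    have h2 := bweight_le_inter p.2 (hinj p hp) S
    have h3 : (S ∩ Finset.univ.image p.2).card < c := by simpa [hIdef] using hSgood p hp
    omega
end
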